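/- arXiv:2205.08795 — 8 statements merged into one kernel-verified Lean document; each statement's English description precedes it below -/
import Mathlib

section
/- Let p be a prime number, let k and l be positive integers, let r and s be integers with 0 ≤ r < k and 0 ≤ s < l, and let u and v be integers coprime to p. If there exist additive group homomorphisms φ : ℤ/p^kℤ → ℤ/p^lℤ with φ(p^r·u) = p^s·v and ψ : ℤ/p^lℤ → ℤ/p^kℤ with ψ(p^s·v) = p^r·u (where p^r·u and p^s·v denote the residue classes of these integers), then k = l and r = s. -/
lemma zmod_cast_mul_smul (N : ℕ) (n x : ℤ) :
    ((n * x : ℤ) : ZMod N) = n • ((x : ℤ) : ZMod N) := by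
  rw [zsmul_eq_mul]; push_cast; ring

lemma degeneration_aux (p : ℕ) (hp : p.Prime) (k l r s : ℕ) (hr : r < k) (hs : s < l)
    (u v : ℤ) (hv : IsCoprime v (p : ℤ))
    (φ : ZMod (p ^ k) →+ ZMod (p ^ l))
    (hφ : φ (((p : ℤ) ^ r * u : ℤ) : ZMod (p ^ k)) = (((p : ℤ) ^ s * v : ℤ) : ZMod (p ^ l))) :
    l + r ≤ k + s ∧ r ≤ s := by
  have hp1 : 1 < p := hp.one_lt
  have hcop : ∀ m : ℕ, IsCoprime ((p : ℤ) ^ m) v := fun m => (hv.symm.pow_left)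
  -- a general tool: p^l ∣ p^t * v → l ≤ t
  have tool : ∀ t : ℕ, ((p : ℤ) ^ l ∣ (p : ℤ) ^ t * v) → l ≤ t := by
    intro t ht
    have h2 : (p : ℤ) ^ l ∣ (p : ℤ) ^ t := (hcop l).dvd_of_dvd_mul_right ht
    have h3 : (p ^ l : ℕ) ∣ p ^ t := by exact_mod_cast h2
    exact (Nat.pow_dvd_pow_iff_le_right hp1).mp h3
  -- convert "cast = 0" to divisibility in ZMod (p^l)
  have zeroiff : ∀ x : ℤ, ((x : ℤ) : ZMod (p ^ l)) = 0 ↔ (p : ℤ) ^ l ∣ x := by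
    intro x
    rw [ZMod.intCast_zmod_eq_zero_iff_dvd]
    push_cast
    rfl
  constructor
  · -- order argument: p^(k-r) kills p^r u, hence kills p^s v
    have h0 : (((p : ℤ) ^ (k - r) * ((p : ℤ) ^ r * u) : ℤ) : ZMod (p ^ k)) = 0 := by
      rw [ZMod.intCast_zmod_eq_zero_iff_dvd]
      push_cast
      have : (p : ℤ) ^ (k - r) * ((p : ℤ) ^ r * u) = (p : ℤ) ^ k * u := by
        rw [← mul_assoc, ← pow_add, Nat.sub_add_cancel hr.le]
      rw [this]
      exact dvd_mul_right _ _
    have h1 : ((p : ℤ) ^ (k - r)) • (((p : ℤ) ^ r * u : ℤ) : ZMod (p ^ k)) = 0 := by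
      rw [← zmod_cast_mul_smul]; exact h0
    have h2 : ((p : ℤ) ^ (k - r)) • (((p : ℤ) ^ s * v : ℤ) : ZMod (p ^ l)) = 0 := by
      rw [← hφ, ← map_zsmul, h1, map_zero]
    rw [← zmod_cast_mul_smul, zeroiff] at h2
    have h3 : (p : ℤ) ^ l ∣ (p : ℤ) ^ (k - r + s) * v := by
      rw [pow_add, mul_assoc]; exact h2
    have := tool _ h3
    omega
  · -- height argument: p^s v = p^r • w with p^l • w = 0
    set w := φ (((u : ℤ)) : ZMod (p ^ k)) with hw
    have hb : (((p : ℤ) ^ s * v : ℤ) : ZMod (p ^ l)) = ((p : ℤ) ^ r) • w := by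
      rw [← hφ, hw, ← map_zsmul, ← zmod_cast_mul_smul]
    have hwl : ((p : ℤ) ^ l) • w = 0 := by
      rw [zsmul_eq_mul]
      have : (((p : ℤ) ^ l : ℤ) : ZMod (p ^ l)) = 0 := by
        rw [zeroiff]
      push_cast at this ⊢
      rw [this, zero_mul]
    rcases le_or_gt r l with h | h
    · have h4 : ((p : ℤ) ^ (l - r)) • (((p : ℤ) ^ s * v : ℤ) : ZMod (p ^ l)) = 0 := by
        rw [hb, smul_smul, ← pow_add, Nat.sub_add_cancel h, hwl]
      rw [← zmod_cast_mul_smul, zeroiff] at h4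
      have h5 : (p : ℤ) ^ l ∣ (p : ℤ) ^ (l - r + s) * v := by
        rw [pow_add, mul_assoc]; exact h4
      have := tool _ h5
      omega
    · exfalso
      have h4 : (((p : ℤ) ^ s * v : ℤ) : ZMod (p ^ l)) = 0 := by
        rw [hb, show (p : ℤ) ^ r = (p : ℤ) ^ (r - l) * (p : ℤ) ^ l by
          rw [← pow_add, Nat.sub_add_cancel h.le], mul_smul, hwl, smul_zero]
      rw [zeroiff] at h4
      have := tool _ h4
      omega

/-- If the class of `p^r·u` in `ℤ/p^kℤ` degenerates to the class of `p^s·v`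
in `ℤ/p^lℤ` and vice versa (via additive group homomorphisms), then `k = l` and `r = s`. -/
theorem degeneration_antisymm (p : ℕ) (hp : p.Prime) (k l : ℕ) (hk : 0 < k) (hl : 0 < l)
    (r s : ℕ) (hr : r < k) (hs : s < l) (u v : ℤ)
    (hu : IsCoprime u (p : ℤ)) (hv : IsCoprime v (p : ℤ))
    (hφ : ∃ φ : ZMod (p ^ k) →+ ZMod (p ^ l),
        φ (((p : ℤ) ^ r * u : ℤ) : ZMod (p ^ k)) = (((p : ℤ) ^ s * v : ℤ) : ZMod (p ^ l)))
    (hψ : ∃ ψ : ZMod (p ^ l) →+ ZMod (p ^ k),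
        ψ (((p : ℤ) ^ s * v : ℤ) : ZMod (p ^ l)) = (((p : ℤ) ^ r * u : ℤ) : ZMod (p ^ k))) :
    k = l ∧ r = s := by
  obtain ⟨φ, hφ⟩ := hφ
  obtain ⟨ψ, hψ⟩ := hψ
  have h1 := degeneration_aux p hp k l r s hr hs u v hv φ hφ
  have h2 := degeneration_aux p hp l k s r hs hr v u hu ψ hψ
  omega
end

section
/- Let p be a prime number, n ≥ 1, and G = ℤ/p^nℤ. Let a ∈ O_{n,p^i} and b ∈ O_{n,p^j} with 0 ≤ i, j ≤ n and a ≠ b. Then a and b are adjacent in the group-annihilator graph Γ(G) if and only if i + j ≥ n. -/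
/-- The `a`-annihilator of the abelian group `G` (viewed as a `ℤ`-module):
`[a : G] = {x ∈ ℤ : x•G ⊆ ℤ•a}`. -/
def annIdeal (G : Type*) [AddCommGroup G] (a : G) : Set ℤ :=
  {x : ℤ | ∀ g : G, ∃ m : ℤ, x • g = m • a}

/-- The group-annihilator graph `Γ(G)`: vertices are the elements of `G`, and distinct
`a`, `b` are adjacent iff `[a : G]·[b : G]·G = {0}`. -/
def grpAnnGraph (G : Type*) [AddCommGroup G] : SimpleGraph G where
  Adj a b := a ≠ b ∧ ∀ x ∈ annIdeal G a, ∀ y ∈ annIdeal G b, ∀ g : G, (x * y) • g = 0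
  symm := by
    constructor
    rintro a b ⟨hne, h⟩
    refine ⟨hne.symm, fun y hy x hx g => ?_⟩
    rw [mul_comm]
    exact h x hx y hy g
  loopless := ⟨fun a h => h.1 rfl⟩

/-- The orbit `O_{n,p^i} ⊆ ℤ/p^nℤ`: classes of `p^i·α` with `α` coprime to `p`. -/
def orbitSet (p n i : ℕ) : Set (ZMod (p ^ n)) :=
  {a | ∃ α : ℤ, IsCoprime α (p : ℤ) ∧ a = (((p : ℤ) ^ i * α : ℤ) : ZMod (p ^ n))}

lemma mem_annIdeal_iff_aux (p n i : ℕ) (hp : p.Prime) (hi : i ≤ n)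
    (α : ℤ) (hα : IsCoprime α (p : ℤ)) (x : ℤ) :
    x ∈ annIdeal (ZMod (p ^ n)) (((p : ℤ) ^ i * α : ℤ) : ZMod (p ^ n)) ↔ (p : ℤ) ^ i ∣ x := by
  haveI : NeZero (p ^ n) := ⟨pow_ne_zero n hp.ne_zero⟩
  constructor
  · intro h
    obtain ⟨m, hm⟩ := h 1
    rw [zsmul_eq_mul, mul_one, zsmul_eq_mul] at hm
    have hm' : ((x : ℤ) : ZMod (p ^ n)) = ((m * ((p : ℤ) ^ i * α) : ℤ) : ZMod (p ^ n)) := by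
      push_cast
      push_cast at hm
      exact hm
    rw [ZMod.intCast_eq_intCast_iff] at hm'
    have hd : ((p ^ n : ℕ) : ℤ) ∣ m * ((p : ℤ) ^ i * α) - x := (Int.modEq_iff_dvd).mp hm'
    have hpi : (p : ℤ) ^ i ∣ m * ((p : ℤ) ^ i * α) - x := by
      refine dvd_trans ?_ hd
      push_cast
      exact pow_dvd_pow _ hi
    have : (p : ℤ) ^ i ∣ m * ((p : ℤ) ^ i * α) := ⟨m * α, by ring⟩
    exact (dvd_sub_right this).mp hpi
  · rintro ⟨c, rfl⟩ g
    obtain ⟨g', rfl⟩ := ZMod.intCast_surjective g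
    obtain ⟨u, v, huv⟩ := (hα.pow_right (n := n))
    refine ⟨c * g' * u, ?_⟩
    rw [zsmul_eq_mul, zsmul_eq_mul]
    have : (((p : ℤ) ^ i * c * g' : ℤ) : ZMod (p ^ n)) =
        ((c * g' * u * ((p : ℤ) ^ i * α) : ℤ) : ZMod (p ^ n)) := by
      rw [ZMod.intCast_eq_intCast_iff]
      refine (Int.modEq_iff_dvd).mpr ⟨-((p : ℤ) ^ i * c * g' * v), ?_⟩
      push_cast
      linear_combination ((p : ℤ) ^ i * c * g') * huv
    push_cast at this ⊢
    linear_combination this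

/-- For a prime `p`, `n ≥ 1`, `a ∈ O_{n,p^i}`, `b ∈ O_{n,p^j}` with
`0 ≤ i, j ≤ n` and `a ≠ b`, the vertices `a` and `b` are adjacent in `Γ(ℤ/p^nℤ)`
iff `i + j ≥ n`. -/
theorem adj_iff_orbit_indices (p n i j : ℕ) (hp : p.Prime) (hn : 1 ≤ n)
    (hi : i ≤ n) (hj : j ≤ n) (a b : ZMod (p ^ n))
    (ha : a ∈ orbitSet p n i) (hb : b ∈ orbitSet p n j) (hab : a ≠ b) :
    (grpAnnGraph (ZMod (p ^ n))).Adj a b ↔ n ≤ i + j := by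
  haveI : NeZero (p ^ n) := ⟨pow_ne_zero n hp.ne_zero⟩
  obtain ⟨α, hα, rfl⟩ := ha
  obtain ⟨β, hβ, rfl⟩ := hb
  constructor
  · intro h
    have h1 := h.2 ((p : ℤ) ^ i)
      ((mem_annIdeal_iff_aux p n i hp hi α hα _).mpr dvd_rfl) ((p : ℤ) ^ j)
      ((mem_annIdeal_iff_aux p n j hp hj β hβ _).mpr dvd_rfl) 1
    rw [zsmul_eq_mul, mul_one] at h1
    have h2 : ((p ^ n : ℕ) : ℤ) ∣ (p : ℤ) ^ i * (p : ℤ) ^ j := by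
      rwa [ZMod.intCast_zmod_eq_zero_iff_dvd] at h1
    have h3 : p ^ n ∣ p ^ (i + j) := by
      rw [pow_add]
      exact_mod_cast h2
    exact (Nat.pow_dvd_pow_iff_le_right hp.one_lt).mp h3
  · intro h
    refine ⟨hab, fun x hx y hy g => ?_⟩
    have hxd : (p : ℤ) ^ i ∣ x := (mem_annIdeal_iff_aux p n i hp hi α hα x).mp hx
    have hyd : (p : ℤ) ^ j ∣ y := (mem_annIdeal_iff_aux p n j hp hj β hβ y).mp hy
    have hd : ((p ^ n : ℕ) : ℤ) ∣ x * y := by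
      push_cast
      calc (p : ℤ) ^ n ∣ (p : ℤ) ^ (i + j) := pow_dvd_pow _ h
        _ = (p : ℤ) ^ i * (p : ℤ) ^ j := pow_add _ _ _
        _ ∣ x * y := mul_dvd_mul hxd hyd
    rw [zsmul_eq_mul]
    have : ((x * y : ℤ) : ZMod (p ^ n)) = 0 := (ZMod.intCast_zmod_eq_zero_iff_dvd _ _).mpr hd
    rw [this, zero_mul]
end

section
/- Let p be a prime number, n ≥ 1, ℓ ≥ 2, and G = (ℤ/p^nℤ)^ℓ viewed as a ℤ-module. For every element a = (a_1, …, a_ℓ) ∈ G, the a-annihilator of G satisfies [a : G] = p^n·ℤ. -/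
lemma zmod_dvd_total (p n : ℕ) (hp : p.Prime) (x y : ZMod (p ^ n)) : x ∣ y ∨ y ∣ x := by
  haveI : NeZero (p ^ n) := ⟨pow_ne_zero n hp.pos.ne'⟩
  rcases eq_or_ne x 0 with rfl | hx
  · right; exact dvd_zero y
  rcases eq_or_ne y 0 with rfl | hy
  · left; exact dvd_zero x
  suffices H : ∀ u v : ZMod (p ^ n), u ≠ 0 → v ≠ 0 →
      u.val.factorization p ≤ v.val.factorization p → u ∣ v by
    rcases le_total (x.val.factorization p) (y.val.factorization p) with h | h
    · exact Or.inl (H x y hx hy h)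
    · exact Or.inr (H y x hy hx h)
  intro u v hu hv h
  have hU : u.val ≠ 0 := by simpa [ZMod.val_eq_zero] using hu
  have hV : v.val ≠ 0 := by simpa [ZMod.val_eq_zero] using hv
  set a := u.val.factorization p with ha
  set b := v.val.factorization p with hb
  have hu' : u.val = p ^ a * (u.val / p ^ a) := (Nat.ordProj_mul_ordCompl_eq_self u.val p).symm
  have hv' : v.val = p ^ b * (v.val / p ^ b) := (Nat.ordProj_mul_ordCompl_eq_self v.val p).symm
  have hcop : Nat.Coprime (u.val / p ^ a) (p ^ n) :=
    ((Nat.coprime_ordCompl hp hU).symm).pow_right n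
  have hunit : IsUnit ((u.val / p ^ a : ℕ) : ZMod (p ^ n)) :=
    (ZMod.isUnit_iff_coprime _ _).mpr hcop
  refine ⟨(((u.val / p ^ a : ℕ) : ZMod (p ^ n)))⁻¹ * (p : ZMod (p ^ n)) ^ (b - a)
    * ((v.val / p ^ b : ℕ) : ZMod (p ^ n)), ?_⟩
  have h1 : ((u.val / p ^ a : ℕ) : ZMod (p ^ n)) * (((u.val / p ^ a : ℕ) : ZMod (p ^ n)))⁻¹ = 1 :=
    ZMod.mul_inv_of_unit _ hunit
  have hueq : u = (p : ZMod (p ^ n)) ^ a * ((u.val / p ^ a : ℕ) : ZMod (p ^ n)) := by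
    conv_lhs => rw [← ZMod.natCast_zmod_val u, hu']
    push_cast
    ring
  have hveq : v = (p : ZMod (p ^ n)) ^ b * ((v.val / p ^ b : ℕ) : ZMod (p ^ n)) := by
    conv_lhs => rw [← ZMod.natCast_zmod_val v, hv']
    push_cast
    ring
  set U := ((u.val / p ^ a : ℕ) : ZMod (p ^ n)) with hUdef
  set S := ((v.val / p ^ b : ℕ) : ZMod (p ^ n)) with hSdef
  symm
  calc u * (U⁻¹ * (p : ZMod (p ^ n)) ^ (b - a) * S)
      = (U * U⁻¹) * (((p : ZMod (p ^ n)) ^ a * (p : ZMod (p ^ n)) ^ (b - a)) * S) := by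
        rw [hueq]; ring
    _ = v := by rw [h1, ← pow_add, Nat.add_sub_cancel' h, one_mul, ← hveq]

/-- For a prime `p`, `n ≥ 1`, `ℓ ≥ 2` and `G = (ℤ/p^nℤ)^ℓ`, the
`a`-annihilator of every `a ∈ G` is `p^n ℤ`. -/
theorem annIdeal_of_rank_ge_two (p n ℓ : ℕ) (hp : p.Prime) (hn : 1 ≤ n) (hℓ : 2 ≤ ℓ)
    (a : Fin ℓ → ZMod (p ^ n)) :
    annIdeal (Fin ℓ → ZMod (p ^ n)) a = {x : ℤ | (p : ℤ) ^ n ∣ x} := by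
  haveI : NeZero (p ^ n) := ⟨pow_ne_zero n hp.pos.ne'⟩
  ext x
  simp only [annIdeal, Set.mem_setOf_eq]
  constructor
  · intro hx
    -- find i ≠ j with a i ∣ a j
    have i0 : Fin ℓ := ⟨0, by omega⟩
    have i1 : Fin ℓ := ⟨1, by omega⟩
    obtain ⟨i, j, hij, c, hc⟩ :
        ∃ i j : Fin ℓ, i ≠ j ∧ ∃ c : ZMod (p ^ n), a j = a i * c := by
      rcases zmod_dvd_total p n hp (a ⟨0, by omega⟩) (a ⟨1, by omega⟩) with ⟨c, hc⟩ | ⟨c, hc⟩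
      · exact ⟨⟨0, by omega⟩, ⟨1, by omega⟩, by simp [Fin.ext_iff], c, hc⟩
      · exact ⟨⟨1, by omega⟩, ⟨0, by omega⟩, by simp [Fin.ext_iff], c, hc⟩
    obtain ⟨m, hm⟩ := hx (Pi.single j 1)
    have hmi := congrFun hm i
    have hmj := congrFun hm j
    simp only [Pi.smul_apply, Pi.single_eq_of_ne hij.symm, Pi.single_eq_of_ne hij, Pi.single_eq_same,
      smul_zero] at hmi hmj
    -- hmi : 0 = m • a i, hmj : x • 1 = m • a j
    have hx0 : (x : ZMod (p ^ n)) = 0 := by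
      have : (x : ZMod (p ^ n)) = (m : ZMod (p ^ n)) * a j := by
        have := hmj
        rw [zsmul_eq_mul, zsmul_eq_mul] at this
        simpa using this
      rw [this, hc, show (m : ZMod (p ^ n)) * (a i * c) = ((m : ZMod (p ^ n)) * a i) * c by ring]
      have h0 : (m : ZMod (p ^ n)) * a i = 0 := by
        have := hmi.symm
        rw [zsmul_eq_mul] at this
        simpa using this
      rw [h0, zero_mul]
    have := (ZMod.intCast_zmod_eq_zero_iff_dvd x (p ^ n)).mp hx0
    exact_mod_cast this
  · intro hxd g
    refine ⟨0, ?_⟩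
    have hx0 : (x : ZMod (p ^ n)) = 0 := by
      rw [ZMod.intCast_zmod_eq_zero_iff_dvd]
      exact_mod_cast hxd
    funext i
    simp [zsmul_eq_mul, hx0]
end

section
/- Let p be a prime number, n ≥ 1, ℓ ≥ 2, and G = (ℤ/p^nℤ)^ℓ. The group-annihilator graph Γ(G) is a complete graph: any two distinct elements a, b ∈ G are adjacent in Γ(G). -/
lemma ann_sq (p n ℓ : ℕ) (hℓ : 2 ≤ ℓ) (a : Fin ℓ → ZMod (p ^ n)) (x : ℤ)
    (hx : x ∈ annIdeal (Fin ℓ → ZMod (p ^ n)) a) : ((x : ZMod (p ^ n)))^2 = 0 := by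
  set i0 : Fin ℓ := ⟨0, by omega⟩
  set i1 : Fin ℓ := ⟨1, by omega⟩
  have hne : i0 ≠ i1 := by simp [i0, i1, Fin.ext_iff]
  obtain ⟨m, hm⟩ := hx (Pi.single i0 1)
  obtain ⟨m', hm'⟩ := hx (Pi.single i1 1)
  have h1 : (x : ZMod (p^n)) = (m : ZMod (p^n)) * a i0 := by
    have := congrFun hm i0
    simpa [Pi.single_eq_same, zsmul_eq_mul] using this
  have h2 : (0 : ZMod (p^n)) = (m : ZMod (p^n)) * a i1 := by
    have := congrFun hm i1
    simpa [Pi.single_eq_of_ne (Ne.symm hne), zsmul_eq_mul] using this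
  have h3 : (x : ZMod (p^n)) = (m' : ZMod (p^n)) * a i1 := by
    have := congrFun hm' i1
    simpa [Pi.single_eq_same, zsmul_eq_mul] using this
  have h4 : (0 : ZMod (p^n)) = (m' : ZMod (p^n)) * a i0 := by
    have := congrFun hm' i0
    simpa [Pi.single_eq_of_ne hne, zsmul_eq_mul] using this
  calc ((x : ZMod (p^n)))^2 = ((m : ZMod (p^n)) * a i0) * ((m' : ZMod (p^n)) * a i1) := by
        rw [← h1, ← h3, sq]
    _ = ((m : ZMod (p^n)) * a i1) * ((m' : ZMod (p^n)) * a i0) := by ring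
    _ = 0 := by rw [← h2, ← h4]; ring

lemma dvd_mul_of_sq (p n : ℕ) (hp : p.Prime) (x y : ℤ)
    (hx : (p:ℤ)^n ∣ x^2) (hy : (p:ℤ)^n ∣ y^2) : (p:ℤ)^n ∣ x * y := by
  rcases eq_or_ne x 0 with rfl | hx0
  · simpa using dvd_zero _
  rcases eq_or_ne y 0 with rfl | hy0
  · simpa using dvd_zero _
  have hx' : p ^ n ∣ x.natAbs ^ 2 := by
    have := Int.natAbs_dvd_natAbs.mpr hx
    simpa [Int.natAbs_pow] using this
  have hy' : p ^ n ∣ y.natAbs ^ 2 := by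
    have := Int.natAbs_dvd_natAbs.mpr hy
    simpa [Int.natAbs_pow] using this
  have hxn : x.natAbs ≠ 0 := Int.natAbs_ne_zero.mpr hx0
  have hyn : y.natAbs ≠ 0 := Int.natAbs_ne_zero.mpr hy0
  have h1 : n ≤ (x.natAbs ^ 2).factorization p :=
    (Nat.Prime.pow_dvd_iff_le_factorization hp (pow_ne_zero 2 hxn)).mp hx'
  have h2 : n ≤ (y.natAbs ^ 2).factorization p :=
    (Nat.Prime.pow_dvd_iff_le_factorization hp (pow_ne_zero 2 hyn)).mp hy'
  rw [Nat.factorization_pow] at h1 h2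
  simp only [Finsupp.smul_apply, smul_eq_mul] at h1 h2
  have : p ^ n ∣ x.natAbs * y.natAbs := by
    rw [Nat.Prime.pow_dvd_iff_le_factorization hp (Nat.mul_ne_zero hxn hyn),
      Nat.factorization_mul hxn hyn]
    simp only [Finsupp.add_apply]
    omega
  have h3 := Int.natCast_dvd_natCast.mpr this
  rw [← Int.natAbs_mul] at h3
  rw [Nat.cast_pow] at h3
  exact Int.dvd_natAbs.mp h3

lemma ann_dvd (p n ℓ : ℕ) (hp : p.Prime) (hn : 1 ≤ n) (hℓ : 2 ≤ ℓ)
    (a : Fin ℓ → ZMod (p ^ n)) (x : ℤ)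
    (hx : x ∈ annIdeal (Fin ℓ → ZMod (p ^ n)) a) : (p:ℤ)^n ∣ x^2 := by
  have h := ann_sq p n ℓ hℓ a x hx
  have hpn : NeZero (p ^ n) := ⟨pow_ne_zero n hp.pos.ne'⟩
  have : ((x^2 : ℤ) : ZMod (p^n)) = 0 := by push_cast; rw [h]
  have := (ZMod.intCast_zmod_eq_zero_iff_dvd (x^2) (p^n)).mp this
  exact_mod_cast this

/-- For a prime `p`, `n ≥ 1` and `ℓ ≥ 2`, the group-annihilator graph of
`G = (ℤ/p^nℤ)^ℓ` is complete: any two distinct elements are adjacent. -/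
theorem grpAnnGraph_complete (p n ℓ : ℕ) (hp : p.Prime) (hn : 1 ≤ n) (hℓ : 2 ≤ ℓ)
    (a b : Fin ℓ → ZMod (p ^ n)) (hab : a ≠ b) :
    (grpAnnGraph (Fin ℓ → ZMod (p ^ n))).Adj a b := by
  refine ⟨hab, fun x hx y hy g => ?_⟩
  have hd : (p:ℤ)^n ∣ x * y :=
    dvd_mul_of_sq p n hp x y (ann_dvd p n ℓ hp hn hℓ a x hx) (ann_dvd p n ℓ hp hn hℓ b y hy)
  have hpn : NeZero (p ^ n) := ⟨pow_ne_zero n hp.pos.ne'⟩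
  have hc : ((x * y : ℤ) : ZMod (p^n)) = 0 :=
    (ZMod.intCast_zmod_eq_zero_iff_dvd (x*y) (p^n)).mpr (by exact_mod_cast hd)
  funext i
  show (x * y) • g i = 0
  rw [zsmul_eq_mul, hc, zero_mul]
end

section
/- Let p be a prime number and ℓ ≥ 2. The automorphism group of the group-annihilator graph Γ((ℤ/pℤ)^ℓ) acts transitively on the vertex set: for any two vertices a, b ∈ (ℤ/pℤ)^ℓ there exists a graph automorphism σ of Γ((ℤ/pℤ)^ℓ) with σ(a) = b. In particular, (ℤ/pℤ)^ℓ is a single orbit of size p^ℓ under this action. -/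
lemma annIdeal_smul_zero (p ℓ : ℕ) (hp : p.Prime) (hℓ : 2 ≤ ℓ)
    (a : Fin ℓ → ZMod p) (x : ℤ) (hx : x ∈ annIdeal (Fin ℓ → ZMod p) a)
    (g : Fin ℓ → ZMod p) : x • g = 0 := by
  haveI : Fact p.Prime := ⟨hp⟩
  have hX : (x : ZMod p) = 0 := by
    by_contra hX
    set i0 : Fin ℓ := ⟨0, by omega⟩
    set i1 : Fin ℓ := ⟨1, by omega⟩
    have hne : i0 ≠ i1 := by simp [i0, i1, Fin.ext_iff]
    obtain ⟨m0, hm0⟩ := hx (Pi.single i0 1)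
    obtain ⟨m1, hm1⟩ := hx (Pi.single i1 1)
    have A0 : (x : ZMod p) = (m0 : ZMod p) * a i0 := by
      have := congrFun hm0 i0
      simpa [Pi.single_apply, zsmul_eq_mul] using this
    have A1 : (0 : ZMod p) = (m0 : ZMod p) * a i1 := by
      have := congrFun hm0 i1
      simpa [Pi.single_apply, hne.symm, zsmul_eq_mul] using this
    have B1 : (x : ZMod p) = (m1 : ZMod p) * a i1 := by
      have := congrFun hm1 i1
      simpa [Pi.single_apply, zsmul_eq_mul] using this
    have hm0ne : (m0 : ZMod p) ≠ 0 := fun h => hX (by rw [A0, h, zero_mul])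
    have ha1 : a i1 ≠ 0 := fun h => hX (by rw [B1, h, mul_zero])
    exact (mul_ne_zero hm0ne ha1) A1.symm
  funext i
  simp [zsmul_eq_mul, hX]

lemma adj_iff (p ℓ : ℕ) (hp : p.Prime) (hℓ : 2 ≤ ℓ) (a b : Fin ℓ → ZMod p) :
    (grpAnnGraph (Fin ℓ → ZMod p)).Adj a b ↔ a ≠ b := by
  constructor
  · exact fun h => h.1
  · intro h
    refine ⟨h, fun x hx y hy g => ?_⟩
    rw [mul_smul]
    rw [annIdeal_smul_zero p ℓ hp hℓ b y hy g, smul_zero]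

/-- For a prime `p` and `ℓ ≥ 2`, the automorphism group of
`Γ((ℤ/pℤ)^ℓ)` acts transitively on the vertices; in particular the vertex set is a
single orbit of size `p^ℓ`. -/
theorem grpAnnGraph_aut_transitive (p ℓ : ℕ) (hp : p.Prime) (hℓ : 2 ≤ ℓ) :
    (∀ a b : Fin ℓ → ZMod p,
        ∃ σ : grpAnnGraph (Fin ℓ → ZMod p) ≃g grpAnnGraph (Fin ℓ → ZMod p), σ a = b) ∧
    Nat.card (Fin ℓ → ZMod p) = p ^ ℓ := by
  haveI : Fact p.Prime := ⟨hp⟩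
  constructor
  · intro a b
    refine ⟨⟨Equiv.swap a b, ?_⟩, Equiv.swap_apply_left a b⟩
    intro x y
    simp only [adj_iff p ℓ hp hℓ]
    exact not_congr (Equiv.apply_eq_iff_eq _)
  · simp [Nat.card_eq_fintype_card, ZMod.card]
end

section
/- Let p be a prime number and k ≤ l positive integers, and let φ : ℤ/p^kℤ → ℤ/p^lℤ be an additive group homomorphism. If a and b are adjacent vertices of the group-annihilator graph Γ(ℤ/p^kℤ) and φ(a) ≠ φ(b), then φ(a) and φ(b) are adjacent in Γ(ℤ/p^lℤ). In other words, every group homomorphism between these cyclic p-groups is a homomorphism of the associated group-annihilator graphs. -/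
lemma val_mem_annIdeal (n : ℕ) [NeZero n] (a : ZMod n) :
    (a.val : ℤ) ∈ annIdeal (ZMod n) a := by
  intro g
  refine ⟨(g.val : ℤ), ?_⟩
  simp only [zsmul_eq_mul, Int.cast_natCast, ZMod.natCast_val, ZMod.cast_id, ZMod.intCast_zmod_cast, mul_comm]

lemma mem_annIdeal_iff (n : ℕ) (a : ZMod n) (x : ℤ) (hx : x ∈ annIdeal (ZMod n) a) :
    ∃ m : ℤ, (x : ZMod n) = (m : ZMod n) * a := by
  obtain ⟨m, hm⟩ := hx 1
  refine ⟨m, ?_⟩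
  simpa [zsmul_eq_mul] using hm

lemma adj_iff_mul_zero (n : ℕ) [NeZero n] (a b : ZMod n) :
    (grpAnnGraph (ZMod n)).Adj a b ↔ a ≠ b ∧ a * b = 0 := by
  constructor
  · rintro ⟨hne, h⟩
    refine ⟨hne, ?_⟩
    have := h (a.val : ℤ) (val_mem_annIdeal n a) (b.val : ℤ) (val_mem_annIdeal n b) 1
    simpa [zsmul_eq_mul, ZMod.natCast_val, ZMod.cast_id] using this
  · rintro ⟨hne, h⟩
    refine ⟨hne, fun x hx y hy g => ?_⟩
    obtain ⟨m, hm⟩ := mem_annIdeal_iff n a x hx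
    obtain ⟨m', hm'⟩ := mem_annIdeal_iff n b y hy
    have : ((x * y : ℤ) : ZMod n) = 0 := by
      push_cast
      rw [hm, hm']
      rw [show (m : ZMod n) * a * ((m' : ZMod n) * b) = (m : ZMod n) * (m' : ZMod n) * (a * b) by
        ring, h, mul_zero]
    rw [zsmul_eq_mul, this, zero_mul]

/-- For a prime `p` and positive integers `k ≤ l`, every additive group
homomorphism `φ : ℤ/p^kℤ → ℤ/p^lℤ` is a homomorphism of the group-annihilator graphs:
it maps edges of `Γ(ℤ/p^kℤ)` with distinct images to edges of `Γ(ℤ/p^lℤ)`. -/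
theorem groupHom_is_graphHom (p k l : ℕ) (hp : p.Prime) (hk : 1 ≤ k) (hkl : k ≤ l)
    (φ : ZMod (p ^ k) →+ ZMod (p ^ l)) (a b : ZMod (p ^ k))
    (hadj : (grpAnnGraph (ZMod (p ^ k))).Adj a b) (hne : φ a ≠ φ b) :
    (grpAnnGraph (ZMod (p ^ l))).Adj (φ a) (φ b) := by
  have hpk : NeZero (p ^ k) := ⟨pow_ne_zero _ hp.ne_zero⟩
  have hpl : NeZero (p ^ l) := ⟨pow_ne_zero _ hp.ne_zero⟩
  rw [adj_iff_mul_zero] at hadj ⊢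
  refine ⟨hne, ?_⟩
  set c : ZMod (p ^ l) := φ 1 with hc
  -- p^k • c = 0
  have hkill : (p ^ k : ℕ) • c = 0 := by
    rw [hc, ← map_nsmul]
    have : (p ^ k : ℕ) • (1 : ZMod (p ^ k)) = 0 := by
      simp [nsmul_eq_mul]
    rw [this, map_zero]
  -- φ a = a.val • c
  have hφ : ∀ u : ZMod (p ^ k), φ u = u.val • c := by
    intro u
    conv_lhs => rw [show u = u.val • (1 : ZMod (p ^ k)) by
      simp [nsmul_eq_mul, ZMod.natCast_val, ZMod.cast_id]]
    rw [map_nsmul]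
  -- p^k ∣ a.val * b.val
  have hdvd : p ^ k ∣ a.val * b.val := by
    have : ((a.val * b.val : ℕ) : ZMod (p ^ k)) = 0 := by
      push_cast
      simp only [ZMod.natCast_val, ZMod.cast_id]
      exact hadj.2
    exact (ZMod.natCast_eq_zero_iff _ _).mp this
  obtain ⟨t, ht⟩ := hdvd
  rw [hφ a, hφ b, smul_mul_smul_comm, ht, mul_comm (p ^ k) t, mul_smul]
  have : (p ^ k : ℕ) • (c * c) = 0 := by
    rw [← smul_mul_assoc, hkill, zero_mul]
  rw [this, smul_zero]
end

section
/- Let Γ₁ and Γ₂ be finite threshold graphs. If Γ₁ and Γ₂ have the same degree sequence, i.e. the multiset of vertex degrees of Γ₁ equals the multiset of vertex degrees of Γ₂, then Γ₁ and Γ₂ are isomorphic as graphs. -/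
/-- A simple graph on a (necessarily finite) vertex type is a threshold graph if its
vertices admit an enumeration `v_1, …, v_n` such that each `v_i` is adjacent either to all
of the previous vertices or to none of them. -/
def IsThreshold {V : Type*} (Γ : SimpleGraph V) : Prop :=
  ∃ e : Fin (Nat.card V) ≃ V,
    ∀ i : Fin (Nat.card V),
      (∀ j, j < i → Γ.Adj (e j) (e i)) ∨ (∀ j, j < i → ¬ Γ.Adj (e j) (e i))

def thrDeg (b : ℕ → Bool) (n i : ℕ) : ℕ :=
  (if b i then i else 0) + ((Finset.Ioo i n).filter (fun j => b j)).card

def thrDegs (b : ℕ → Bool) (n : ℕ) : Multiset ℕ :=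
  (Finset.range n).val.map (thrDeg b n)

lemma Ioo_succ (i n : ℕ) (hi : i < n) :
    Finset.Ioo i (n + 1) = insert n (Finset.Ioo i n) := by
  ext k; simp [Finset.mem_Ioo]; omega

lemma thrDeg_last (b : ℕ → Bool) (n : ℕ) :
    thrDeg b (n + 1) n = if b n then n else 0 := by
  have : (Finset.Ioo n (n+1)).filter (fun j => b j) = ∅ := by
    rw [Finset.filter_eq_empty_iff]; intro k hk; simp [Finset.mem_Ioo] at hk; omega
  simp [thrDeg, this]

lemma thrDeg_lt (b : ℕ → Bool) (n i : ℕ) (hi : i < n + 1) (hn : 1 ≤ n)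
    (hb : b n = false) : thrDeg b (n + 1) i < n := by
  rcases eq_or_lt_of_le (Nat.lt_succ_iff.mp hi) with rfl | hi'
  · simp [thrDeg_last, hb]; omega
  · have h1 : (if b i then i else 0) ≤ i := by split <;> omega
    have h2 : ((Finset.Ioo i (n+1)).filter (fun j => b j)).card
        = ((Finset.Ioo i n).filter (fun j => b j)).card := by
      rw [Ioo_succ i n hi', Finset.filter_insert, hb]
      simp
    have h3 : ((Finset.Ioo i n).filter (fun j => b j)).card ≤ (Finset.Ioo i n).card :=
      Finset.card_filter_le _ _
    rw [Nat.card_Ioo] at h3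
    unfold thrDeg
    omega

lemma thrDeg_shift (b : ℕ → Bool) (n i : ℕ) (hi : i < n) :
    thrDeg b (n + 1) i = thrDeg b n i + (if b n then 1 else 0) := by
  unfold thrDeg
  rw [Ioo_succ i n hi, Finset.filter_insert]
  have hn : n ∉ (Finset.Ioo i n).filter (fun j => b j) := by simp
  rcases hbn : b n
  · simp [hbn]
  · simp [hbn, Finset.card_insert_of_notMem hn]; omega

lemma thrDegs_succ (b : ℕ → Bool) (n : ℕ) :
    thrDegs b (n + 1) =
      (if b n then n else 0) ::ₘ (thrDegs b n).map (· + (if b n then 1 else 0)) := by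
  unfold thrDegs
  rw [Finset.range_add_one, Finset.insert_val, Multiset.ndinsert_of_notMem (by simp),
    Multiset.map_cons, thrDeg_last, Multiset.map_map]
  congr 1
  rw [Multiset.map_congr rfl]
  intro i hi
  simp only [Function.comp_apply]
  exact thrDeg_shift b n i (by simpa using hi)

lemma mem_thrDegs_last (b : ℕ → Bool) (n : ℕ) (hn : 1 ≤ n) :
    b n = true ↔ (n : ℕ) ∈ thrDegs b (n + 1) := by
  constructor
  · intro hb
    have : thrDeg b (n+1) n = n := by rw [thrDeg_last, hb]; simp
    unfold thrDegs
    rw [Multiset.mem_map]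
    exact ⟨n, by simp, this⟩
  · intro hmem
    by_contra hb
    have hb' : b n = false := by simpa using hb
    unfold thrDegs at hmem
    rw [Multiset.mem_map] at hmem
    obtain ⟨i, hi, hdi⟩ := hmem
    simp only [Finset.mem_val, Finset.mem_range] at hi
    have := thrDeg_lt b n i hi hn hb'
    omega

lemma thrDegs_inj (n : ℕ) (b c : ℕ → Bool) (hb0 : b 0 = false) (hc0 : c 0 = false)
    (h : thrDegs b n = thrDegs c n) : ∀ i < n, b i = c i := by
  induction n with
  | zero => omega
  | succ n ih =>
    have hbn : b n = c n := by
      rcases Nat.eq_zero_or_pos n with rfl | hn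
      · rw [hb0, hc0]
      · rcases hb : b n
        · rcases hc : c n
          · rfl
          · exfalso
            have := (mem_thrDegs_last c n hn).mp hc
            rw [← h, ← mem_thrDegs_last b n hn] at this
            rw [hb] at this; exact Bool.false_ne_true this
        · rcases hc : c n
          · exfalso
            have := (mem_thrDegs_last b n hn).mp hb
            rw [h, ← mem_thrDegs_last c n hn] at this
            rw [hc] at this; exact Bool.false_ne_true this
          · rfl
    rw [thrDegs_succ, thrDegs_succ, hbn] at h
    have h2 : (thrDegs b n).map (· + (if c n then 1 else 0)) =
        (thrDegs c n).map (· + (if c n then 1 else 0)) := by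
      exact (Multiset.cons_inj_right _).mp h
    have h3 : thrDegs b n = thrDegs c n :=
      Multiset.map_injective (fun x y => by omega) h2
    intro i hi
    rcases Nat.lt_succ_iff_lt_or_eq.mp hi with hi' | rfl
    · exact ih h3 i hi'
    · exact hbn

open Classical in
noncomputable def bOf {V : Type*} (Γ : SimpleGraph V) {n : ℕ} (e : Fin n ≃ V) : ℕ → Bool :=
  fun k => if h : k < n then
    (if ∃ j : Fin n, j.val < k ∧ Γ.Adj (e j) (e ⟨k, h⟩) then true else false) else false

lemma bOf_adj {V : Type*} (Γ : SimpleGraph V) {n : ℕ} (e : Fin n ≃ V)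
    (hthr : ∀ i : Fin n,
      (∀ j, j < i → Γ.Adj (e j) (e i)) ∨ (∀ j, j < i → ¬ Γ.Adj (e j) (e i)))
    (i j : Fin n) :
    Γ.Adj (e i) (e j) ↔
      (j.val < i.val ∧ bOf Γ e i.val = true) ∨ (i.val < j.val ∧ bOf Γ e j.val = true) := by
  have key : ∀ p q : Fin n, p < q → (Γ.Adj (e p) (e q) ↔ bOf Γ e q.val = true) := by
    intro p q hpq
    unfold bOf
    rw [dif_pos q.isLt]
    simp only [Fin.eta]
    constructor
    · intro hA
      rw [if_pos ⟨p, hpq, hA⟩]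
    · intro hb
      by_cases hex : ∃ j' : Fin n, j'.val < q.val ∧ Γ.Adj (e j') (e q)
      · obtain ⟨j', hj', hAj'⟩ := hex
        rcases hthr q with hall | hnone
        · exact hall p hpq
        · exact absurd hAj' (hnone j' (by rwa [Fin.lt_def]))
      · rw [if_neg hex] at hb; exact absurd hb (by simp)
  rcases lt_trichotomy i j with h | h | h
  · rw [key i j h]
    have : ¬ j.val < i.val := by rw [Fin.lt_def] at h; omega
    rw [Fin.lt_def] at h
    tauto
  · subst h
    simp [SimpleGraph.irrefl]
  · rw [Γ.adj_comm, key j i h]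
    have : ¬ i.val < j.val := by rw [Fin.lt_def] at h; omega
    rw [Fin.lt_def] at h
    tauto

lemma thrDeg_eq_card (b : ℕ → Bool) (n i : ℕ) (hi : i < n) :
    thrDeg b n i = ((Finset.range n).filter
      (fun k => (k < i ∧ b i = true) ∨ (i < k ∧ b k = true))).card := by
  have h1 : (Finset.range n).filter
        (fun k => (k < i ∧ b i = true) ∨ (i < k ∧ b k = true))
      = ((Finset.range n).filter (fun k => k < i ∧ b i = true)) ∪
        ((Finset.range n).filter (fun k => i < k ∧ b k = true)) := Finset.filter_or _ _ _
  have hdisj : Disjoint ((Finset.range n).filter (fun k => k < i ∧ b i = true))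
      ((Finset.range n).filter (fun k => i < k ∧ b k = true)) := by
    rw [Finset.disjoint_filter]
    intro k _ hk1 hk2
    omega
  rw [h1, Finset.card_union_of_disjoint hdisj]
  have h2 : ((Finset.range n).filter (fun k => i < k ∧ b k = true))
      = (Finset.Ioo i n).filter (fun k => b k) := by
    ext k; simp [Finset.mem_Ioo, Finset.mem_range]; tauto
  have h3 : ((Finset.range n).filter (fun k => k < i ∧ b i = true)).card
      = if b i then i else 0 := by
    by_cases hb : b i = true
    · have he : (Finset.range n).filter (fun k => k < i ∧ b i = true)
          = Finset.range i := by
        ext k; simp only [Finset.mem_filter, Finset.mem_range, hb, and_true]; omega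
      rw [he, Finset.card_range, if_pos hb]
    · rw [Finset.filter_false_of_mem (fun k _ => by simp [hb]), if_neg hb]
      simp
  rw [h2, h3]
  rfl

lemma degree_eq_thrDeg {V : Type*} [Fintype V] (Γ : SimpleGraph V) [DecidableRel Γ.Adj]
    {n : ℕ} (e : Fin n ≃ V) (b : ℕ → Bool)
    (hadj : ∀ i j : Fin n, Γ.Adj (e i) (e j) ↔
      (j.val < i.val ∧ b i.val = true) ∨ (i.val < j.val ∧ b j.val = true))
    (i : Fin n) : Γ.degree (e i) = thrDeg b n i.val := by
  rw [thrDeg_eq_card b n i.val i.isLt, ← SimpleGraph.card_neighborFinset_eq_degree]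
  apply Finset.card_nbij (i := fun v => (e.symm v).val)
  · intro v hv
    rw [Finset.mem_coe, SimpleGraph.mem_neighborFinset] at hv
    have := (hadj i (e.symm v)).mp (by simpa using hv)
    simp only [Finset.mem_coe, Finset.mem_filter, Finset.mem_range]
    exact ⟨(e.symm v).isLt, this⟩
  · intro u _ v _ h
    exact e.symm.injective (Fin.val_injective h)
  · intro k hk
    simp only [Finset.coe_filter, Set.mem_setOf_eq, Finset.mem_range] at hk
    obtain ⟨hkn, hQ⟩ := hk
    refine ⟨e ⟨k, hkn⟩, ?_, by simp⟩
    rw [Finset.mem_coe, SimpleGraph.mem_neighborFinset]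
    exact (hadj i ⟨k, hkn⟩).mpr (by simpa using hQ)

lemma degs_eq {V : Type*} [Fintype V] (Γ : SimpleGraph V) [DecidableRel Γ.Adj]
    {n : ℕ} (e : Fin n ≃ V) (b : ℕ → Bool)
    (hadj : ∀ i j : Fin n, Γ.Adj (e i) (e j) ↔
      (j.val < i.val ∧ b i.val = true) ∨ (i.val < j.val ∧ b j.val = true)) :
    Multiset.map (fun v => Γ.degree v) Finset.univ.val = thrDegs b n := by
  have huniv : (Finset.univ : Finset V).val
      = ((Finset.univ : Finset (Fin n)).val).map e := by
    rw [← congr_arg Finset.val (Finset.map_univ_equiv e), Finset.map_val]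
    rfl
  have hrange : (Finset.range n).val
      = ((Finset.univ : Finset (Fin n)).val).map Fin.val := by
    rw [← Nat.Iio_eq_range, ← Fin.map_valEmbedding_univ, Finset.map_val]
    rfl
  rw [huniv, Multiset.map_map]
  unfold thrDegs
  rw [hrange, Multiset.map_map]
  apply Multiset.map_congr rfl
  intro i _
  exact degree_eq_thrDeg Γ e b hadj i

theorem threshold_iso_of_degreeSequence_eq' {V₁ V₂ : Type*} [Fintype V₁] [Fintype V₂]
    (Γ₁ : SimpleGraph V₁) (Γ₂ : SimpleGraph V₂)
    [DecidableRel Γ₁.Adj] [DecidableRel Γ₂.Adj]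
    (h₁ : ∃ e : Fin (Nat.card V₁) ≃ V₁, ∀ i,
      (∀ j, j < i → Γ₁.Adj (e j) (e i)) ∨ (∀ j, j < i → ¬ Γ₁.Adj (e j) (e i)))
    (h₂ : ∃ e : Fin (Nat.card V₂) ≃ V₂, ∀ i,
      (∀ j, j < i → Γ₂.Adj (e j) (e i)) ∨ (∀ j, j < i → ¬ Γ₂.Adj (e j) (e i)))
    (hdeg : Multiset.map (fun v => Γ₁.degree v) Finset.univ.val =
      Multiset.map (fun v => Γ₂.degree v) Finset.univ.val) :
    Nonempty (Γ₁ ≃g Γ₂) := by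
  obtain ⟨e₁, ht₁⟩ := h₁
  obtain ⟨e₂, ht₂⟩ := h₂
  have hadj₁ := bOf_adj Γ₁ e₁ ht₁
  have hadj₂ := bOf_adj Γ₂ e₂ ht₂
  have hd₁ := degs_eq Γ₁ e₁ _ hadj₁
  have hd₂ := degs_eq Γ₂ e₂ _ hadj₂
  have hDD : thrDegs (bOf Γ₁ e₁) (Nat.card V₁) = thrDegs (bOf Γ₂ e₂) (Nat.card V₂) := by
    rw [← hd₁, ← hd₂, hdeg]
  have hn : Nat.card V₁ = Nat.card V₂ := by
    have := congr_arg Multiset.card hDD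
    simpa [thrDegs] using this
  have hb0 : bOf Γ₁ e₁ 0 = false := by
    unfold bOf
    split
    · rw [if_neg]; rintro ⟨j, hj, -⟩; omega
    · rfl
  have hc0 : bOf Γ₂ e₂ 0 = false := by
    unfold bOf
    split
    · rw [if_neg]; rintro ⟨j, hj, -⟩; omega
    · rfl
  have hbc : ∀ k < Nat.card V₁, bOf Γ₁ e₁ k = bOf Γ₂ e₂ k := by
    apply thrDegs_inj (Nat.card V₁) _ _ hb0 hc0
    rw [hDD, hn]
  refine ⟨⟨e₁.symm.trans ((finCongr hn).trans e₂), ?_⟩⟩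
  intro u v
  simp only [Equiv.trans_apply]
  obtain ⟨i, rfl⟩ : ∃ i, e₁ i = u := ⟨e₁.symm u, e₁.apply_symm_apply u⟩
  obtain ⟨j, rfl⟩ : ∃ j, e₁ j = v := ⟨e₁.symm v, e₁.apply_symm_apply v⟩
  rw [e₁.symm_apply_apply, e₁.symm_apply_apply, hadj₁ i j,
    hadj₂ (finCongr hn i) (finCongr hn j)]
  simp only [finCongr_apply, Fin.coe_cast]
  constructor
  · rintro (⟨hl, h2⟩ | ⟨hl, h2⟩)
    · exact Or.inl ⟨hl, (hbc i.val i.isLt).trans h2⟩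
    · exact Or.inr ⟨hl, (hbc j.val j.isLt).trans h2⟩
  · rintro (⟨hl, h2⟩ | ⟨hl, h2⟩)
    · exact Or.inl ⟨hl, (hbc i.val i.isLt).symm.trans h2⟩
    · exact Or.inr ⟨hl, (hbc j.val j.isLt).symm.trans h2⟩

/-- Two finite threshold graphs with the same degree sequence (as a
multiset of vertex degrees) are isomorphic. -/
theorem threshold_iso_of_degreeSequence_eq {V₁ V₂ : Type*} [Fintype V₁] [Fintype V₂]
    (Γ₁ : SimpleGraph V₁) (Γ₂ : SimpleGraph V₂)
    [DecidableRel Γ₁.Adj] [DecidableRel Γ₂.Adj]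
    (h₁ : IsThreshold Γ₁) (h₂ : IsThreshold Γ₂)
    (hdeg : Multiset.map (fun v => Γ₁.degree v) Finset.univ.val =
      Multiset.map (fun v => Γ₂.degree v) Finset.univ.val) :
    Nonempty (Γ₁ ≃g Γ₂) := by
  exact threshold_iso_of_degreeSequence_eq' Γ₁ Γ₂ h₁ h₂ hdeg
end

section
/- Let p be an odd prime number and k ≥ 1. A real number μ is an eigenvalue of the Laplacian matrix of the group-annihilator graph Γ(ℤ/p^kℤ) if and only if μ = 0 or μ = p^i for some integer i with 0 ≤ i ≤ k. That is, the Laplacian spectrum of Γ(ℤ/p^kℤ), as a set, equals {0, 1, p, p², …, p^{k−1}, p^k}. -/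
open Classical in
/-- The Laplacian matrix `D - A` of a finite simple graph: diagonal entries are the
vertex degrees, off-diagonal entries are `-1` for adjacent pairs and `0` otherwise. -/
noncomputable def lapMat {V : Type*} [Fintype V] [DecidableEq V] (Γ : SimpleGraph V) :
    Matrix V V ℝ :=
  Matrix.of fun a b =>
    if a = b then ((Γ.neighborSet a).ncard : ℝ) else if Γ.Adj a b then -1 else 0

namespace GAG

variable (p k : ℕ)

/-- `p`-adic level of an element of `ZMod (p^k)`. -/
def wv (a : ZMod (p^k)) : ℕ := (Nat.gcd (p^k) a.val).factorization p

variable [Fact p.Prime]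

lemma hp' : p.Prime := Fact.out

lemma wv_spec (a : ZMod (p^k)) : p ^ wv p k a = Nat.gcd (p^k) a.val ∧ wv p k a ≤ k := by
  obtain ⟨i, hik, hi⟩ := (Nat.dvd_prime_pow (hp' p)).mp (Nat.gcd_dvd_left (p^k) a.val)
  have : wv p k a = i := by
    rw [wv, hi, (hp' p).factorization_pow]; simp
  rw [this, hi]; exact ⟨rfl, hik⟩

lemma pow_wv (a : ZMod (p^k)) : p ^ wv p k a = Nat.gcd (p^k) a.val := (wv_spec p k a).1

lemma wv_le (a : ZMod (p^k)) : wv p k a ≤ k := (wv_spec p k a).2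

lemma wv_eq_of_gcd (a : ZMod (p^k)) (i : ℕ) (h : Nat.gcd (p^k) a.val = p^i) :
    wv p k a = i := by
  have h2 : p ^ wv p k a = p ^ i := by rw [pow_wv, h]
  exact Nat.pow_right_injective (hp' p).two_le h2

lemma wv_zero : wv p k (0 : ZMod (p^k)) = k := by
  apply wv_eq_of_gcd
  rw [ZMod.val_zero, Nat.gcd_zero_right]

/-- element of level `i`. -/
def ptv (i : ℕ) : ZMod (p^k) := ((p^i : ℕ) : ZMod (p^k))

lemma wv_ptv {i : ℕ} (hi : i ≤ k) : wv p k (ptv p k i) = i := by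
  rcases eq_or_lt_of_le hi with heq | hlt
  · rw [heq]
    have : ptv p k k = 0 := by rw [ptv]; exact_mod_cast ZMod.natCast_self _
    rw [this, wv_zero]
  · apply wv_eq_of_gcd
    rw [ptv, ZMod.val_natCast_of_lt (Nat.pow_lt_pow_right (hp' p).one_lt hlt)]
    exact Nat.gcd_eq_right (Nat.pow_dvd_pow p hi)

lemma wv_eq_k_iff (a : ZMod (p^k)) : wv p k a = k ↔ a = 0 := by
  constructor
  · intro h
    have hd : p ^ k ∣ a.val := by
      have h2 := Nat.gcd_dvd_right (p^k) a.val
      rw [← pow_wv p k a, h] at h2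
      exact h2
    rcases Nat.eq_zero_or_pos a.val with h0 | h0
    · exact (ZMod.val_eq_zero a).mp h0
    · have := Nat.le_of_dvd h0 hd
      have hlt := ZMod.val_lt a
      omega
  · rintro rfl; exact wv_zero p k


lemma annIdeal_eq (a : ZMod (p^k)) :
    annIdeal (ZMod (p^k)) a = {x : ℤ | ((p:ℤ)^(wv p k a)) ∣ x} := by
  have hgcd : ((Nat.gcd (p^k) a.val : ℕ) : ℤ) = (p:ℤ) ^ wv p k a := by
    rw [← pow_wv p k a]; push_cast; ring
  ext x
  simp only [annIdeal, Set.mem_setOf_eq]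
  constructor
  · intro h
    obtain ⟨m, hm⟩ := h 1
    rw [zsmul_eq_mul, zsmul_eq_mul, mul_one] at hm
    -- hm : (x : ZMod (p^k)) = (m : ZMod (p^k)) * a
    have hdvd : ((p^k : ℕ) : ℤ) ∣ (x - m * a.val) := by
      rw [← ZMod.intCast_zmod_eq_zero_iff_dvd]
      push_cast
      rw [ZMod.natCast_val, ZMod.cast_id]
      rw [hm]; ring
    rw [← hgcd]
    have h1 : ((Nat.gcd (p^k) a.val : ℕ) : ℤ) ∣ (x - m * a.val) :=
      dvd_trans (Int.natCast_dvd_natCast.mpr (Nat.gcd_dvd_left _ _)) hdvd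
    have h2 : ((Nat.gcd (p^k) a.val : ℕ) : ℤ) ∣ m * a.val :=
      Dvd.dvd.mul_left (Int.natCast_dvd_natCast.mpr (Nat.gcd_dvd_right _ _)) m
    have := dvd_add h1 h2
    simpa using this
  · intro hx g
    rw [← hgcd] at hx
    obtain ⟨t, ht⟩ := hx
    refine ⟨t * Nat.gcdB (p^k) a.val * g.val, ?_⟩
    rw [zsmul_eq_mul, zsmul_eq_mul]
    have hbez := Nat.gcd_eq_gcd_ab (p^k) a.val
    -- cast bezout into ZMod (p^k)
    have hbz : ((Nat.gcd (p^k) a.val : ℕ) : ZMod (p^k))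
        = a * ((Nat.gcdB (p^k) a.val : ℤ) : ZMod (p^k)) := by
      have h0 := congrArg (fun z : ℤ => (z : ZMod (p^k))) hbez
      push_cast at h0
      rw [ZMod.natCast_val, ZMod.cast_id] at h0
      rw [h0]
      have hzero : ((p : ZMod (p^k)))^k = 0 := by exact_mod_cast ZMod.natCast_self (p^k)
      rw [hzero]
      ring
    have hgval : ((g.val : ℕ) : ZMod (p^k)) = g := by
      rw [ZMod.natCast_val, ZMod.cast_id]
    rw [ht]
    push_cast
    rw [hbz, hgval]
    ring

lemma adj_iff (a b : ZMod (p^k)) :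
    (grpAnnGraph (ZMod (p^k))).Adj a b ↔ a ≠ b ∧ k ≤ wv p k a + wv p k b := by
  have hAdj : (grpAnnGraph (ZMod (p^k))).Adj a b ↔ a ≠ b ∧
      ∀ x ∈ annIdeal (ZMod (p^k)) a, ∀ y ∈ annIdeal (ZMod (p^k)) b,
        ∀ g : ZMod (p^k), (x * y) • g = 0 := Iff.rfl
  rw [hAdj, annIdeal_eq, annIdeal_eq]
  constructor
  · rintro ⟨hne, h⟩
    refine ⟨hne, ?_⟩
    have := h ((p:ℤ)^(wv p k a)) dvd_rfl ((p:ℤ)^(wv p k b)) dvd_rfl 1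
    rw [zsmul_eq_mul, mul_one] at this
    have h2 : (((p^(wv p k a + wv p k b) : ℕ) : ℤ) : ZMod (p^k)) = 0 := by
      push_cast
      rw [pow_add] at *
      exact_mod_cast this
    rw [ZMod.intCast_zmod_eq_zero_iff_dvd] at h2
    have h3 : (p:ℕ)^k ∣ p^(wv p k a + wv p k b) := by exact_mod_cast h2
    exact (Nat.pow_dvd_pow_iff_le_right (hp' p).one_lt).mp h3
  · rintro ⟨hne, hsum⟩
    refine ⟨hne, ?_⟩
    intro x hx y hy g
    rw [Set.mem_setOf_eq] at hx hy
    have hdvd : ((p^k : ℕ) : ℤ) ∣ x * y := by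
      push_cast
      calc ((p:ℤ)^k) ∣ (p:ℤ)^(wv p k a + wv p k b) := pow_dvd_pow _ hsum
        _ = (p:ℤ)^(wv p k a) * (p:ℤ)^(wv p k b) := pow_add _ _ _
        _ ∣ x * y := mul_dvd_mul hx hy
    rw [zsmul_eq_mul]
    have : ((x * y : ℤ) : ZMod (p^k)) = 0 := by
      rw [ZMod.intCast_zmod_eq_zero_iff_dvd]
      exact_mod_cast hdvd
    rw [this, zero_mul]

/-- The set of elements of level at least `m`. -/
def Sfin (m : ℕ) : Finset (ZMod (p^k)) := Finset.univ.filter (fun a => m ≤ wv p k a)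

lemma mem_Sfin (m : ℕ) (a : ZMod (p^k)) : a ∈ Sfin p k m ↔ m ≤ wv p k a := by
  simp [Sfin]

lemma mem_Sfin_iff_dvd (m : ℕ) (hm : m ≤ k) (a : ZMod (p^k)) :
    a ∈ Sfin p k m ↔ p^m ∣ a.val := by
  rw [mem_Sfin]
  constructor
  · intro h
    calc p^m ∣ p^(wv p k a) := Nat.pow_dvd_pow p h
      _ = Nat.gcd (p^k) a.val := pow_wv p k a
      _ ∣ a.val := Nat.gcd_dvd_right _ _
  · intro h
    have h2 : p^m ∣ p^(wv p k a) := by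
      rw [pow_wv]
      exact Nat.dvd_gcd (Nat.pow_dvd_pow p hm) h
    exact (Nat.pow_dvd_pow_iff_le_right (hp' p).one_lt).mp h2

lemma card_Sfin (m : ℕ) (hm : m ≤ k) : (Sfin p k m).card = p^(k-m) := by
  classical
  have hp1 : 1 < p := (hp' p).one_lt
  have hmpos : 0 < p^m := Nat.pow_pos (by omega)
  have hsplit : p^k = p^(k-m) * p^m := by
    rw [← pow_add]
    congr 1
    omega
  have h := Finset.card_bij' (s := Sfin p k m) (t := Finset.range (p^(k-m)))
    (i := fun a _ => a.val / p^m)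
    (j := fun x _ => ((x * p^m : ℕ) : ZMod (p^k)))
    ?hi ?hj ?left ?right
  · rw [h, Finset.card_range]
  case hi =>
    intro a ha
    rw [Finset.mem_range]
    have hlt : a.val < p^k := ZMod.val_lt a
    have hlt2 : a.val < p^(k-m) * p^m := lt_of_lt_of_eq hlt hsplit
    exact Nat.div_lt_of_lt_mul (by rw [mul_comm]; exact hlt2)
  case hj =>
    intro x hx
    rw [Finset.mem_range] at hx
    have hlt : x * p^m < p^k := by
      rw [hsplit]
      exact (Nat.mul_lt_mul_right hmpos).mpr hx
    rw [mem_Sfin_iff_dvd p k m hm, ZMod.val_natCast_of_lt hlt]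
    exact dvd_mul_left _ _
  case left =>
    intro a ha
    rw [mem_Sfin_iff_dvd p k m hm] at ha
    rw [Nat.div_mul_cancel ha, ZMod.natCast_val, ZMod.cast_id]
  case right =>
    intro x hx
    rw [Finset.mem_range] at hx
    have hlt : x * p^m < p^k := by
      rw [hsplit]
      exact (Nat.mul_lt_mul_right hmpos).mpr hx
    rw [ZMod.val_natCast_of_lt hlt]
    exact Nat.mul_div_cancel x hmpos

lemma neighborFinset_eq (a : ZMod (p^k)) :
    (grpAnnGraph (ZMod (p^k))).neighborSet a = ↑((Sfin p k (k - wv p k a)).erase a) := by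
  ext b
  have hwa := wv_le p k a
  simp only [SimpleGraph.mem_neighborSet, Finset.coe_erase, Set.mem_diff,
    Finset.mem_coe, mem_Sfin, Set.mem_singleton_iff]
  rw [adj_iff]
  constructor
  · rintro ⟨hne, hsum⟩
    exact ⟨by omega, fun h => hne (h ▸ rfl)⟩
  · rintro ⟨hge, hne⟩
    exact ⟨fun h => hne h.symm, by omega⟩

lemma lap_mulVec (v : ZMod (p^k) → ℝ) (a : ZMod (p^k)) :
    (lapMat (grpAnnGraph (ZMod (p^k)))).mulVec v a
      = (p:ℝ)^(wv p k a) * v a - ∑ b ∈ Sfin p k (k - wv p k a), v b := by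
  classical
  have hwa := wv_le p k a
  set N : Finset (ZMod (p^k)) := (Sfin p k (k - wv p k a)).erase a with hN
  have hcardS : (Sfin p k (k - wv p k a)).card = p ^ (wv p k a) := by
    rw [card_Sfin p k _ (by omega)]
    congr 1
    omega
  have hdiag : lapMat (grpAnnGraph (ZMod (p^k))) a a = (N.card : ℝ) := by
    have h1 : lapMat (grpAnnGraph (ZMod (p^k))) a a
        = (((grpAnnGraph (ZMod (p^k))).neighborSet a).ncard : ℝ) := by
      rw [lapMat]
      simp
    rw [h1, neighborFinset_eq, Set.ncard_coe_finset]
  have hmemN : ∀ b, (grpAnnGraph (ZMod (p^k))).Adj a b ↔ b ∈ N := by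
    intro b
    rw [hN, Finset.mem_erase, mem_Sfin, adj_iff]
    constructor
    · rintro ⟨hne, hsum⟩
      exact ⟨fun h => hne (h ▸ rfl), by omega⟩
    · rintro ⟨hne, hge⟩
      exact ⟨fun h => hne h.symm, by omega⟩
  have hoff : ∀ b, b ≠ a → lapMat (grpAnnGraph (ZMod (p^k))) a b
      = if b ∈ N then (-1 : ℝ) else 0 := by
    intro b hb
    have hne : ¬ (a = b) := fun h => hb h.symm
    rw [lapMat]
    simp only [Matrix.of_apply]
    rw [if_neg hne]
    by_cases hadj : (grpAnnGraph (ZMod (p^k))).Adj a b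
    · rw [if_pos hadj, if_pos ((hmemN b).mp hadj)]
    · rw [if_neg hadj, if_neg (fun h => hadj ((hmemN b).mpr h))]
  have hmv : (lapMat (grpAnnGraph (ZMod (p^k)))).mulVec v a
      = ∑ b, lapMat (grpAnnGraph (ZMod (p^k))) a b * v b := rfl
  rw [hmv, ← Finset.add_sum_erase _ _ (Finset.mem_univ a), hdiag]
  have hsub : N ⊆ Finset.univ.erase a := by
    intro b hb
    rw [Finset.mem_erase]
    exact ⟨(Finset.mem_erase.mp hb).1, Finset.mem_univ b⟩
  have hsum3 : ∑ b ∈ Finset.univ.erase a, lapMat (grpAnnGraph (ZMod (p^k))) a b * v b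
      = - ∑ b ∈ N, v b := by
    rw [Finset.sum_congr rfl (fun b hb => by
      rw [hoff b (Finset.mem_erase.mp hb).1, ite_mul, zero_mul, neg_one_mul])]
    rw [← Finset.sum_filter]
    rw [show Finset.filter (fun b => b ∈ N) (Finset.univ.erase a) = N from by
      ext b
      simp only [Finset.mem_filter]
      exact ⟨fun h => h.2, fun h => ⟨hsub h, h⟩⟩]
    exact Finset.sum_neg_distrib _
  rw [hsum3]
  by_cases hmem : a ∈ Sfin p k (k - wv p k a)
  · have hc : N.card = p ^ (wv p k a) - 1 := by
      rw [hN, Finset.card_erase_of_mem hmem, hcardS]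
    have hpos : 1 ≤ p ^ (wv p k a) := Nat.one_le_pow _ _ (hp' p).pos
    have hcR : (N.card : ℝ) = (p:ℝ) ^ (wv p k a) - 1 := by
      rw [hc, Nat.cast_sub hpos]
      push_cast
      ring
    have hesum : ∑ b ∈ N, v b = (∑ b ∈ Sfin p k (k - wv p k a), v b) - v a := by
      rw [hN, Finset.sum_erase_eq_sub hmem]
    rw [hcR, hesum]
    ring
  · have hc : N = Sfin p k (k - wv p k a) := Finset.erase_eq_of_notMem hmem
    have hcR : (N.card : ℝ) = (p:ℝ) ^ (wv p k a) := by
      rw [hc, hcardS]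
      push_cast
      ring
    rw [hcR, hc]
    ring

/-- indicator of level `≥ t`. -/
def chi (t : ℕ) : ZMod (p^k) → ℝ := fun a => if t ≤ wv p k a then 1 else 0

lemma sum_chi (m t : ℕ) (hm : m ≤ k) (ht : t ≤ k) :
    ∑ b ∈ Sfin p k m, chi p k t b = (p:ℝ)^(k - max m t) := by
  simp only [chi]
  rw [Finset.sum_boole]
  have hfil : Finset.filter (fun b => t ≤ wv p k b) (Sfin p k m) = Sfin p k (max m t) := by
    rw [Sfin, Finset.filter_filter, Sfin]
    congr 1
    funext a
    rw [eq_iff_iff, ← max_le_iff]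
  rw [hfil, card_Sfin p k _ (by omega)]
  push_cast
  ring

lemma sum_delta (m : ℕ) (c : ZMod (p^k)) (x : ℝ) :
    ∑ b ∈ Sfin p k m, (if b = c then x else 0) = if c ∈ Sfin p k m then x else 0 :=
  Finset.sum_ite_eq' _ _ (fun _ => x)

/-- eigenvalue 0 : all-ones vector. -/
lemma eig_zero (hk : 1 ≤ k) :
    (lapMat (grpAnnGraph (ZMod (p^k)))).mulVec (chi p k 0) = (0:ℝ) • (chi p k 0) := by
  funext a
  have hwa := wv_le p k a
  rw [lap_mulVec, sum_chi p k _ 0 (by omega) (by omega)]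
  have h1 : chi p k 0 a = 1 := if_pos (Nat.zero_le _)
  have h2 : k - max (k - wv p k a) 0 = wv p k a := by omega
  rw [h1, h2]
  simp

/-- eigenvalue p^k : dominating vertex vector. -/
lemma eig_dom (hk : 1 ≤ k) :
    (lapMat (grpAnnGraph (ZMod (p^k)))).mulVec
      (fun a => (p:ℝ)^k * (if a = 0 then 1 else 0) - chi p k 0 a)
    = ((p:ℝ)^k) • (fun a => (p:ℝ)^k * (if a = 0 then 1 else 0) - chi p k 0 a) := by
  funext a
  have hwa := wv_le p k a
  rw [lap_mulVec]
  have hzero : (0 : ZMod (p^k)) ∈ Sfin p k (k - wv p k a) := by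
    rw [mem_Sfin, wv_zero]
    omega
  have hsum : ∑ b ∈ Sfin p k (k - wv p k a),
      ((p:ℝ)^k * (if b = 0 then 1 else 0) - chi p k 0 b)
      = (p:ℝ)^k - (p:ℝ)^(wv p k a) := by
    rw [Finset.sum_sub_distrib, ← Finset.mul_sum, sum_delta, if_pos hzero,
      sum_chi p k _ 0 (by omega) (by omega)]
    have h2 : k - max (k - wv p k a) 0 = wv p k a := by omega
    rw [h2]
    ring
  rw [hsum]
  have h1 : chi p k 0 a = 1 := if_pos (Nat.zero_le _)
  simp only [Pi.smul_apply, smul_eq_mul, h1]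
  by_cases ha : a = 0
  · have : wv p k a = k := by rw [ha, wv_zero]
    rw [if_pos ha, this]
    ring
  · rw [if_neg ha]
    ring

/-- eigenvalue p^j for j < k : twin vector. -/
lemma eig_twin (hp2 : p ≠ 2) (j : ℕ) (hj : j < k) :
    (lapMat (grpAnnGraph (ZMod (p^k)))).mulVec
      (fun a => (if a = ptv p k j then (1:ℝ) else 0)
        - (if a = ((2 * p^j : ℕ) : ZMod (p^k)) then 1 else 0))
    = ((p:ℝ)^j) • (fun a => (if a = ptv p k j then (1:ℝ) else 0)
        - (if a = ((2 * p^j : ℕ) : ZMod (p^k)) then 1 else 0)) := by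
  have hp1 : 1 < p := (hp' p).one_lt
  have hp3 : 3 ≤ p := by
    have := (hp' p).two_le
    omega
  set pa := ptv p k j with hpa
  set pb := ((2 * p^j : ℕ) : ZMod (p^k)) with hpb
  have hwpa : wv p k pa = j := wv_ptv p k (le_of_lt hj)
  have hlt2 : 2 * p^j < p^k := by
    calc 2 * p^j < p * p^j := by
          have : 0 < p^j := Nat.pow_pos (by omega)
          exact (Nat.mul_lt_mul_right this).mpr (by omega)
      _ = p^(j+1) := by ring
      _ ≤ p^k := Nat.pow_le_pow_right (by omega) (by omega)
  have hwpb : wv p k pb = j := by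
    apply wv_eq_of_gcd
    rw [hpb, ZMod.val_natCast_of_lt hlt2]
    have hcop : Nat.Coprime 2 (p^k) := Nat.Coprime.pow_right _ (by
      rw [Nat.coprime_primes Nat.prime_two (hp' p)]
      omega)
    rw [Nat.Coprime.gcd_mul_left_cancel_right _ hcop]
    exact Nat.gcd_eq_right (Nat.pow_dvd_pow p (le_of_lt hj))
  have hne : pa ≠ pb := by
    intro h
    have h1 : (pa).val = p^j := by
      rw [hpa, ptv, ZMod.val_natCast_of_lt (by
        exact Nat.pow_lt_pow_right (hp' p).one_lt hj)]
    have h2 : (pb).val = 2 * p^j := by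
      rw [hpb, ZMod.val_natCast_of_lt hlt2]
    rw [h] at h1
    rw [h1] at h2
    have : 0 < p^j := Nat.pow_pos (by omega)
    omega
  funext a
  have hwa := wv_le p k a
  rw [lap_mulVec]
  have hsum : ∑ b ∈ Sfin p k (k - wv p k a),
      ((if b = pa then (1:ℝ) else 0) - (if b = pb then 1 else 0)) = 0 := by
    rw [Finset.sum_sub_distrib, sum_delta, sum_delta]
    have hmema : pa ∈ Sfin p k (k - wv p k a) ↔ k - wv p k a ≤ j := by
      rw [mem_Sfin, hwpa]
    have hmemb : pb ∈ Sfin p k (k - wv p k a) ↔ k - wv p k a ≤ j := by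
      rw [mem_Sfin, hwpb]
    by_cases hc : k - wv p k a ≤ j
    · rw [if_pos (hmema.mpr hc), if_pos (hmemb.mpr hc)]
      ring
    · rw [if_neg (fun h => hc (hmema.mp h)), if_neg (fun h => hc (hmemb.mp h))]
      ring
  rw [hsum]
  simp only [Pi.smul_apply, smul_eq_mul]
  by_cases h1 : a = pa
  · rw [if_pos h1, if_neg (fun h => hne ((h1.symm.trans h) ▸ rfl))]
    have : wv p k a = j := by rw [h1, hwpa]
    rw [this]
    ring
  · by_cases h2 : a = pb
    · rw [if_neg h1, if_pos h2]
      have : wv p k a = j := by rw [h2, hwpb]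
      rw [this]
      ring
    · rw [if_neg h1, if_neg h2]
      ring

/-- eigenvalue p^j for 2j+2 ≤ k (family A). -/
lemma eig_famA (j r : ℕ) (hr : 1 ≤ r) (hkk : k = 2*j+1+r) :
    (lapMat (grpAnnGraph (ZMod (p^k)))).mulVec
      (fun a => (1 - (p:ℝ)^r) * chi p k j a + ((p:ℝ)^(r+1) - 1) * chi p k (j+1) a
        + ((p:ℝ)^r - (p:ℝ)^(r+1)) * chi p k (j+1+r) a)
    = ((p:ℝ)^j) • (fun a => (1 - (p:ℝ)^r) * chi p k j a + ((p:ℝ)^(r+1) - 1) * chi p k (j+1) a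
        + ((p:ℝ)^r - (p:ℝ)^(r+1)) * chi p k (j+1+r) a) := by
  funext a
  have hwa : wv p k a ≤ k := wv_le p k a
  rw [lap_mulVec]
  have hsum : ∑ b ∈ Sfin p k (k - wv p k a),
      ((1 - (p:ℝ)^r) * chi p k j b + ((p:ℝ)^(r+1) - 1) * chi p k (j+1) b
        + ((p:ℝ)^r - (p:ℝ)^(r+1)) * chi p k (j+1+r) b)
      = (1 - (p:ℝ)^r) * (p:ℝ)^(k - max (k - wv p k a) j)
        + ((p:ℝ)^(r+1) - 1) * (p:ℝ)^(k - max (k - wv p k a) (j+1))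
        + ((p:ℝ)^r - (p:ℝ)^(r+1)) * (p:ℝ)^(k - max (k - wv p k a) (j+1+r)) := by
    rw [Finset.sum_add_distrib, Finset.sum_add_distrib,
      ← Finset.mul_sum, ← Finset.mul_sum, ← Finset.mul_sum,
      sum_chi p k _ _ (by omega) (by omega), sum_chi p k _ _ (by omega) (by omega),
      sum_chi p k _ _ (by omega) (by omega)]
  rw [hsum]
  simp only [Pi.smul_apply, smul_eq_mul, chi]
  rcases lt_or_ge (wv p k a) (j+1) with h1 | h1
  · -- wv a ≤ j
    have m1 : k - max (k - wv p k a) j = wv p k a := by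
      rw [Nat.max_eq_left (by omega)]; omega
    have m2 : k - max (k - wv p k a) (j+1) = wv p k a := by
      rw [Nat.max_eq_left (by omega)]; omega
    have m3 : k - max (k - wv p k a) (j+1+r) = wv p k a := by
      rw [Nat.max_eq_left (by omega)]; omega
    rw [m1, m2, m3, if_neg (show ¬ (j+1 ≤ wv p k a) by omega),
      if_neg (show ¬ (j+1+r ≤ wv p k a) by omega)]
    by_cases h2 : j ≤ wv p k a
    · have heq : wv p k a = j := by omega
      rw [if_pos h2, heq]
      ring
    · rw [if_neg h2]
      ring
  · rcases lt_or_ge (wv p k a) (j+1+r) with h2 | h2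
    · -- j+1 ≤ wv a < j+1+r
      have m1 : k - max (k - wv p k a) j = wv p k a := by
        rw [Nat.max_eq_left (by omega)]; omega
      have m2 : k - max (k - wv p k a) (j+1) = wv p k a := by
        rw [Nat.max_eq_left (by omega)]; omega
      have m3 : k - max (k - wv p k a) (j+1+r) = j := by
        rw [Nat.max_eq_right (by omega)]; omega
      rw [m1, m2, m3, if_pos (show j ≤ wv p k a by omega),
        if_pos (show j+1 ≤ wv p k a by omega),
        if_neg (show ¬ (j+1+r ≤ wv p k a) by omega)]
      ring
    · -- wv a ≥ j+1+r
      have m1 : k - max (k - wv p k a) j = j+1+r := by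
        rw [Nat.max_eq_right (by omega)]; omega
      have m2 : k - max (k - wv p k a) (j+1) = j+r := by
        rw [Nat.max_eq_right (by omega)]; omega
      have m3 : k - max (k - wv p k a) (j+1+r) = j := by
        rw [Nat.max_eq_right (by omega)]; omega
      rw [m1, m2, m3, if_pos (show j ≤ wv p k a by omega),
        if_pos (show j+1 ≤ wv p k a by omega),
        if_pos (show j+1+r ≤ wv p k a by omega)]
      ring

/-- eigenvalue p^(s+1+d) for k = 2s+2+d (family B). -/
lemma eig_famB (s d j : ℕ) (hd : 1 ≤ d) (hkk : k = 2*s+2+d) (hj : j = s+1+d) :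
    (lapMat (grpAnnGraph (ZMod (p^k)))).mulVec
      (fun a => (1 - (p:ℝ)) * chi p k (s+1) a + ((p:ℝ)^(d+1) - 1) * chi p k j a
        + ((p:ℝ) - (p:ℝ)^(d+1)) * chi p k (s+2+d) a)
    = ((p:ℝ)^j) • (fun a => (1 - (p:ℝ)) * chi p k (s+1) a
        + ((p:ℝ)^(d+1) - 1) * chi p k j a
        + ((p:ℝ) - (p:ℝ)^(d+1)) * chi p k (s+2+d) a) := by
  subst hj
  funext a
  have hwa : wv p k a ≤ k := wv_le p k a
  rw [lap_mulVec]
  have hsum : ∑ b ∈ Sfin p k (k - wv p k a),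
      ((1 - (p:ℝ)) * chi p k (s+1) b + ((p:ℝ)^(d+1) - 1) * chi p k (s+1+d) b
        + ((p:ℝ) - (p:ℝ)^(d+1)) * chi p k (s+2+d) b)
      = (1 - (p:ℝ)) * (p:ℝ)^(k - max (k - wv p k a) (s+1))
        + ((p:ℝ)^(d+1) - 1) * (p:ℝ)^(k - max (k - wv p k a) (s+1+d))
        + ((p:ℝ) - (p:ℝ)^(d+1)) * (p:ℝ)^(k - max (k - wv p k a) (s+2+d)) := by
    rw [Finset.sum_add_distrib, Finset.sum_add_distrib,
      ← Finset.mul_sum, ← Finset.mul_sum, ← Finset.mul_sum,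
      sum_chi p k _ _ (by omega) (by omega), sum_chi p k _ _ (by omega) (by omega),
      sum_chi p k _ _ (by omega) (by omega)]
  rw [hsum]
  simp only [Pi.smul_apply, smul_eq_mul, chi]
  rcases lt_or_ge (wv p k a) (s+1) with h1 | h1
  · -- wv a ≤ s : all zero
    have m1 : k - max (k - wv p k a) (s+1) = wv p k a := by
      rw [Nat.max_eq_left (by omega)]; omega
    have m2 : k - max (k - wv p k a) (s+1+d) = wv p k a := by
      rw [Nat.max_eq_left (by omega)]; omega
    have m3 : k - max (k - wv p k a) (s+2+d) = wv p k a := by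
      rw [Nat.max_eq_left (by omega)]; omega
    rw [m1, m2, m3, if_neg (show ¬ (s+1 ≤ wv p k a) by omega),
      if_neg (show ¬ (s+1+d ≤ wv p k a) by omega),
      if_neg (show ¬ (s+2+d ≤ wv p k a) by omega)]
    ring
  · rcases lt_or_ge (wv p k a) (s+1+d) with h2 | h2
    · -- s+1 ≤ wv a < s+1+d
      have m1 : k - max (k - wv p k a) (s+1) = wv p k a := by
        rw [Nat.max_eq_left (by omega)]; omega
      have m2 : k - max (k - wv p k a) (s+1+d) = s+1 := by
        rw [Nat.max_eq_right (by omega)]; omega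
      have m3 : k - max (k - wv p k a) (s+2+d) = s := by
        rw [Nat.max_eq_right (by omega)]; omega
      rw [m1, m2, m3, if_pos (show s+1 ≤ wv p k a by omega),
        if_neg (show ¬ (s+1+d ≤ wv p k a) by omega),
        if_neg (show ¬ (s+2+d ≤ wv p k a) by omega)]
      ring
    · rcases lt_or_ge (wv p k a) (s+2+d) with h3 | h3
      · -- wv a = s+1+d
        have hEq : wv p k a = s+1+d := by omega
        have m1 : k - max (k - wv p k a) (s+1) = s+1+d := by
          rw [Nat.max_eq_left (by omega)]; omega
        have m2 : k - max (k - wv p k a) (s+1+d) = s+1 := by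
          rw [Nat.max_eq_right (by omega)]; omega
        have m3 : k - max (k - wv p k a) (s+2+d) = s := by
          rw [Nat.max_eq_right (by omega)]; omega
        rw [m1, m2, m3, if_pos (show s+1 ≤ wv p k a by omega),
          if_pos (show s+1+d ≤ wv p k a by omega),
          if_neg (show ¬ (s+2+d ≤ wv p k a) by omega), hEq]
        ring
      · -- wv a ≥ s+2+d
        have m1 : k - max (k - wv p k a) (s+1) = s+1+d := by
          rw [Nat.max_eq_right (by omega)]; omega
        have m2 : k - max (k - wv p k a) (s+1+d) = s+1 := by
          rw [Nat.max_eq_right (by omega)]; omega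
        have m3 : k - max (k - wv p k a) (s+2+d) = s := by
          rw [Nat.max_eq_right (by omega)]; omega
        rw [m1, m2, m3, if_pos (show s+1 ≤ wv p k a by omega),
          if_pos (show s+1+d ≤ wv p k a by omega),
          if_pos (show s+2+d ≤ wv p k a by omega)]
        ring

lemma mem_spectrum_iff' {n : Type*} [Fintype n] [DecidableEq n] (M : Matrix n n ℝ) (μ : ℝ) :
    μ ∈ spectrum ℝ M ↔ ∃ v, v ≠ 0 ∧ M.mulVec v = μ • v := by
  rw [spectrum.mem_iff, Matrix.isUnit_iff_isUnit_det, isUnit_iff_ne_zero, not_ne_iff,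
    ← Matrix.exists_mulVec_eq_zero_iff]
  constructor
  · rintro ⟨v, hv, h⟩
    refine ⟨v, hv, ?_⟩
    rw [Matrix.sub_mulVec, Algebra.algebraMap_eq_smul_one, Matrix.smul_mulVec,
      Matrix.one_mulVec, sub_eq_zero] at h
    exact h.symm
  · rintro ⟨v, hv, h⟩
    refine ⟨v, hv, ?_⟩
    rw [Matrix.sub_mulVec, Algebra.algebraMap_eq_smul_one, Matrix.smul_mulVec,
      Matrix.one_mulVec, sub_eq_zero, h]

lemma chi_const (t : ℕ) (a b : ZMod (p^k)) (h : wv p k a = wv p k b) :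
    chi p k t a = chi p k t b := by
  simp only [chi, h]

lemma chi_ptv (t i : ℕ) (hi : i ≤ k) :
    chi p k t (ptv p k i) = if t ≤ i then 1 else 0 := by
  simp only [chi, wv_ptv p k hi]

lemma chi_zero_val (a : ZMod (p^k)) : chi p k 0 a = 1 := if_pos (Nat.zero_le _)

end GAG

open GAG in
set_option maxHeartbeats 2000000 in
/-- For an odd prime `p` and `k ≥ 1`, the Laplacian spectrum of the
group-annihilator graph `Γ(ℤ/p^kℤ)` is exactly `{0, 1, p, p², …, p^{k-1}, p^k}`. -/
theorem lap_spectrum_grpAnnGraph (p k : ℕ) [Fact p.Prime] (hp2 : p ≠ 2) (hk : 1 ≤ k) (μ : ℝ) :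
    μ ∈ spectrum ℝ (lapMat (grpAnnGraph (ZMod (p ^ k)))) ↔
      μ = 0 ∨ ∃ i ≤ k, μ = (p : ℝ) ^ i := by
  classical
  have hp1 : 1 < p := (hp' p).one_lt
  have hp1R : (1:ℝ) < (p:ℝ) := by exact_mod_cast hp1
  rw [mem_spectrum_iff']
  constructor
  · -- spectrum ⊆ claimed set
    rintro ⟨u, hu0, huEq⟩
    by_contra hcon
    push_neg at hcon
    obtain ⟨hμ0, hμi⟩ := hcon
    -- u is constant on levels
    have hne_pow : ∀ t, t ≤ k → (p:ℝ)^t - μ ≠ 0 := by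
      intro t ht
      exact sub_ne_zero_of_ne (Ne.symm (hμi t ht))
    have key : ∀ a, u a = (∑ b ∈ Sfin p k (k - wv p k a), u b) / ((p:ℝ)^(wv p k a) - μ) := by
      intro a
      have h := congrFun huEq a
      rw [lap_mulVec] at h
      simp only [Pi.smul_apply, smul_eq_mul] at h
      rw [eq_div_iff (hne_pow _ (wv_le p k a))]
      linear_combination h
    have hconstu : ∀ a b, wv p k a = wv p k b → u a = u b := by
      intro a b hab
      rw [key a, key b, hab]
    -- the k+1 known eigenvectors
    set evec : Fin (k+1) → (ZMod (p^k) → ℝ) := fun i =>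
      if (i:ℕ) = k/2 then chi p k 0
      else if (i:ℕ) = k then (fun a => (p:ℝ)^k * (if a = 0 then 1 else 0) - chi p k 0 a)
      else if 2*(i:ℕ)+2 ≤ k then
        (fun a => (1 - (p:ℝ)^(k-2*(i:ℕ)-1)) * chi p k (i:ℕ) a
          + ((p:ℝ)^((k-2*(i:ℕ)-1)+1) - 1) * chi p k ((i:ℕ)+1) a
          + ((p:ℝ)^(k-2*(i:ℕ)-1) - (p:ℝ)^((k-2*(i:ℕ)-1)+1)) * chi p k ((i:ℕ)+1+(k-2*(i:ℕ)-1)) a)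
      else
        (fun a => (1 - (p:ℝ)) * chi p k ((k-(i:ℕ)-1)+1) a
          + ((p:ℝ)^((2*(i:ℕ)-k)+1) - 1) * chi p k (i:ℕ) a
          + ((p:ℝ) - (p:ℝ)^((2*(i:ℕ)-k)+1)) * chi p k ((k-(i:ℕ)-1)+2+(2*(i:ℕ)-k)) a)
      with hevec
    set μs : Fin (k+1) → ℝ := fun i => if (i:ℕ) = k/2 then 0 else (p:ℝ)^(i:ℕ) with hμs
    have hfin : ∀ i : Fin (k+1), (i:ℕ) ≤ k := fun i => Nat.lt_succ_iff.mp i.isLt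
    -- eigenvector facts
    have heig : ∀ i : Fin (k+1),
        Module.End.HasEigenvector (Matrix.mulVecLin (lapMat (grpAnnGraph (ZMod (p^k)))) : Module.End ℝ (ZMod (p^k) → ℝ)) (μs i) (evec i) := by
      intro i
      rw [Module.End.hasEigenvector_iff, Module.End.mem_eigenspace_iff, Matrix.mulVecLin_apply]
      by_cases hcm : (i:ℕ) = k/2
      · rw [hevec, hμs]
        simp only [if_pos hcm]
        refine ⟨eig_zero p k hk, ?_⟩
        intro h
        have h0 := congrFun h (0 : ZMod (p^k))
        rw [chi_zero_val, Pi.zero_apply] at h0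
        norm_num at h0
      · by_cases hck : (i:ℕ) = k
        · rw [hevec, hμs]
          simp only [if_neg hcm, if_pos hck]
          rw [hck]
          refine ⟨eig_dom p k hk, ?_⟩
          intro h
          have h0 := congrFun h (0 : ZMod (p^k))
          rw [Pi.zero_apply, if_pos rfl, chi_zero_val] at h0
          have h2 : (2:ℝ) ≤ (p:ℝ)^k := by
            have : 2 ≤ p^k := by
              calc 2 ≤ p := hp1
                _ = p^1 := (pow_one p).symm
                _ ≤ p^k := Nat.pow_le_pow_right (by omega) hk
            exact_mod_cast this
          norm_num at h0
          linarith
        · by_cases hle : 2*(i:ℕ)+2 ≤ k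
          · rw [hevec, hμs]
            simp only [if_neg hcm, if_neg hck, if_pos hle]
            have hr : 1 ≤ k-2*(i:ℕ)-1 := by omega
            refine ⟨eig_famA p k (i:ℕ) (k-2*(i:ℕ)-1) hr (by omega), ?_⟩
            intro h
            have h0 := congrFun h (ptv p k (i:ℕ))
            rw [Pi.zero_apply, chi_ptv p k _ _ (hfin i), chi_ptv p k _ _ (hfin i),
              chi_ptv p k _ _ (hfin i), if_pos le_rfl,
              if_neg (show ¬ ((i:ℕ)+1 ≤ (i:ℕ)) by omega),
              if_neg (show ¬ ((i:ℕ)+1+(k-2*(i:ℕ)-1) ≤ (i:ℕ)) by omega)] at h0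
            have h2 : (2:ℝ) ≤ (p:ℝ)^(k-2*(i:ℕ)-1) := by
              have : 2 ≤ p^(k-2*(i:ℕ)-1) := by
                calc 2 ≤ p := hp1
                  _ = p^1 := (pow_one p).symm
                  _ ≤ p^(k-2*(i:ℕ)-1) := Nat.pow_le_pow_right (by omega) hr
              exact_mod_cast this
            norm_num at h0
            linarith
          · rw [hevec, hμs]
            simp only [if_neg hcm, if_neg hck, if_neg hle]
            have hd : 1 ≤ 2*(i:ℕ)-k := by
              have h1 := hfin i
              have hne2 : (i:ℕ) ≠ k/2 := hcm
              omega
            have hkk : k = 2*(k-(i:ℕ)-1)+2+(2*(i:ℕ)-k) := by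
              have h1 := hfin i
              omega
            have hji : (i:ℕ) = (k-(i:ℕ)-1)+1+(2*(i:ℕ)-k) := by
              have h1 := hfin i
              omega
            refine ⟨eig_famB p k (k-(i:ℕ)-1) (2*(i:ℕ)-k) (i:ℕ) hd hkk hji, ?_⟩
            intro h
            have h0 := congrFun h (ptv p k (i:ℕ))
            rw [Pi.zero_apply, chi_ptv p k _ _ (hfin i), chi_ptv p k _ _ (hfin i),
              chi_ptv p k _ _ (hfin i),
              if_pos (show (k-(i:ℕ)-1)+1 ≤ (i:ℕ) by have := hfin i; omega),
              if_pos le_rfl,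
              if_neg (show ¬ ((k-(i:ℕ)-1)+2+(2*(i:ℕ)-k) ≤ (i:ℕ)) by have := hfin i; omega)] at h0
            have h2 : (p:ℝ) < (p:ℝ)^((2*(i:ℕ)-k)+1) := by
              have : p < p^((2*(i:ℕ)-k)+1) := by
                calc p = p^1 := (pow_one p).symm
                  _ < p^((2*(i:ℕ)-k)+1) := Nat.pow_lt_pow_right hp1 (by omega)
              exact_mod_cast this
            norm_num at h0
            linarith
    -- eigenvalues are injective over the extended family
    have hInj : Function.Injective (fun o : Option (Fin (k+1)) => o.elim μ μs) := by
      intro o o' h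
      simp only at h
      match o, o' with
      | none, none => rfl
      | none, some i =>
        exfalso
        rw [hμs] at h
        simp only [Option.elim] at h
        by_cases hcm : (i:ℕ) = k/2
        · rw [if_pos hcm] at h; exact hμ0 h
        · rw [if_neg hcm] at h; exact hμi (i:ℕ) (hfin i) h
      | some i, none =>
        exfalso
        rw [hμs] at h
        simp only [Option.elim] at h
        by_cases hcm : (i:ℕ) = k/2
        · rw [if_pos hcm] at h; exact hμ0 h.symm
        · rw [if_neg hcm] at h; exact hμi (i:ℕ) (hfin i) h.symm
      | some i, some i' =>
        congr 1
        rw [hμs] at h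
        simp only [Option.elim] at h
        have hppow : ∀ m : ℕ, (p:ℝ)^m ≠ 0 := fun m => pow_ne_zero m (by positivity)
        by_cases h1 : (i:ℕ) = k/2 <;> by_cases h2 : (i':ℕ) = k/2
        · exact Fin.ext (h1.trans h2.symm)
        · rw [if_pos h1, if_neg h2] at h; exact absurd h.symm (hppow _)
        · rw [if_neg h1, if_pos h2] at h; exact absurd h (hppow _)
        · rw [if_neg h1, if_neg h2] at h
          apply Fin.ext
          have : ((p^(i:ℕ) : ℕ) : ℝ) = ((p^(i':ℕ) : ℕ) : ℝ) := by push_cast; exact h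
          exact Nat.pow_right_injective (hp' p).two_le (by exact_mod_cast this)
    -- full family of eigenvectors
    have hEigAll : ∀ o : Option (Fin (k+1)),
        Module.End.HasEigenvector (Matrix.mulVecLin (lapMat (grpAnnGraph (ZMod (p^k)))) : Module.End ℝ (ZMod (p^k) → ℝ))
          (o.elim μ μs) (o.elim u evec) := by
      rintro (_ | i)
      · rw [Module.End.hasEigenvector_iff, Module.End.mem_eigenspace_iff, Matrix.mulVecLin_apply]
        exact ⟨huEq, hu0⟩
      · exact heig i
    have hLI := Module.End.eigenvectors_linearIndependent'
      (Matrix.mulVecLin (lapMat (grpAnnGraph (ZMod (p^k)))) : Module.End ℝ (ZMod (p^k) → ℝ))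
      (fun o : Option (Fin (k+1)) => o.elim μ μs) hInj
      (fun o => o.elim u evec) hEigAll
    -- all these vectors are constant on levels
    have hconstAll : ∀ o : Option (Fin (k+1)), ∀ a b : ZMod (p^k),
        wv p k a = wv p k b → (o.elim u evec) a = (o.elim u evec) b := by
      rintro (_ | i) a b hab
      · exact hconstu a b hab
      · simp only [Option.elim, hevec]
        by_cases hcm : (i:ℕ) = k/2
        · rw [if_pos hcm]; exact chi_const p k 0 a b hab
        · by_cases hck : (i:ℕ) = k
          · rw [if_neg hcm, if_pos hck]
            by_cases ha : a = 0
            · have hb : b = 0 := by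
                rw [← wv_eq_k_iff p k b, ← hab, wv_eq_k_iff p k a]
                exact ha
              rw [if_pos ha, if_pos hb, chi_const p k 0 a b hab]
            · have hb : ¬ (b = 0) := by
                rw [← wv_eq_k_iff p k b, ← hab, wv_eq_k_iff p k a]
                exact ha
              rw [if_neg ha, if_neg hb, chi_const p k 0 a b hab]
          · by_cases hle : 2*(i:ℕ)+2 ≤ k
            · rw [if_neg hcm, if_neg hck, if_pos hle]
              rw [chi_const p k _ a b hab, chi_const p k _ a b hab, chi_const p k _ a b hab]
            · rw [if_neg hcm, if_neg hck, if_neg hle]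
              rw [chi_const p k _ a b hab, chi_const p k _ a b hab, chi_const p k _ a b hab]
    -- project down to Fin (k+1) → ℝ
    have hTrec : ∀ h : ZMod (p^k) → ℝ, (∀ a b, wv p k a = wv p k b → h a = h b) →
        (LinearMap.funLeft ℝ ℝ
          (fun a : ZMod (p^k) => (⟨wv p k a, Nat.lt_succ_of_le (wv_le p k a)⟩ : Fin (k+1))))
          (fun i => h (ptv p k (i:ℕ))) = h := by
      intro h hc
      funext a
      simp only [LinearMap.funLeft_apply]
      exact hc _ _ (wv_ptv p k (wv_le p k a))
    have hrepr : (fun o : Option (Fin (k+1)) => o.elim u evec)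
        = ⇑(LinearMap.funLeft ℝ ℝ
            (fun a : ZMod (p^k) => (⟨wv p k a, Nat.lt_succ_of_le (wv_le p k a)⟩ : Fin (k+1))))
          ∘ (fun o : Option (Fin (k+1)) => (fun i : Fin (k+1) => (o.elim u evec) (ptv p k (i:ℕ)))) := by
      funext o
      exact (hTrec _ (hconstAll o)).symm
    rw [hrepr] at hLI
    have hsmall := LinearIndependent.of_comp _ hLI
    have hcard := hsmall.fintype_card_le_finrank
    rw [Module.finrank_pi] at hcard
    simp only [Fintype.card_option, Fintype.card_fin] at hcard
    omega
  · -- claimed set ⊆ spectrum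
    rintro (rfl | ⟨i, hik, rfl⟩)
    · refine ⟨chi p k 0, ?_, eig_zero p k hk⟩
      intro h
      have h0 := congrFun h (0 : ZMod (p^k))
      rw [chi_zero_val, Pi.zero_apply] at h0
      norm_num at h0
    · rcases eq_or_lt_of_le hik with heq | hlt
      · rw [heq]
        refine ⟨_, ?_, eig_dom p k hk⟩
        intro h
        have h0 := congrFun h (0 : ZMod (p^k))
        rw [Pi.zero_apply, if_pos rfl, chi_zero_val] at h0
        have h2 : (2:ℝ) ≤ (p:ℝ)^k := by
          have : 2 ≤ p^k := by
            calc 2 ≤ p := hp1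
              _ = p^1 := (pow_one p).symm
              _ ≤ p^k := Nat.pow_le_pow_right (by omega) hk
          exact_mod_cast this
        norm_num at h0
        linarith
      · refine ⟨_, ?_, eig_twin p k hp2 i hlt⟩
        intro h
        have h0 := congrFun h (ptv p k i)
        simp only [Pi.zero_apply] at h0
        rw [if_true] at h0
        have hne : ptv p k i ≠ ((2 * p^i : ℕ) : ZMod (p^k)) := by
          intro hEq
          have h1 : (ptv p k i).val = p^i := by
            rw [ptv, ZMod.val_natCast_of_lt (Nat.pow_lt_pow_right hp1 hlt)]
          have hlt2 : 2 * p^i < p^k := by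
            calc 2 * p^i < p * p^i := by
                  have hpos : 0 < p^i := Nat.pow_pos (by omega)
                  exact (Nat.mul_lt_mul_right hpos).mpr (by omega)
              _ = p^(i+1) := by ring
              _ ≤ p^k := Nat.pow_le_pow_right (by omega) (by omega)
          have h2 : (((2 * p^i : ℕ) : ZMod (p^k))).val = 2 * p^i := ZMod.val_natCast_of_lt hlt2
          rw [hEq, h2] at h1
          have hpos : 0 < p^i := Nat.pow_pos (by omega)
          omega
        rw [if_neg hne] at h0
        norm_num at h0
end
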